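/- arXiv:2307.03044 — 5 statements merged into one kernel-verified Lean document; each statement's English description precedes it below -/
import Mathlib

section
/- If M is an irreducible nonnegative real square matrix, then M has a real eigenvalue λ > 0 (the Perron–Frobenius eigenvalue) such that λ ≥ |μ| for every eigenvalue μ of M, and λ has algebraic multiplicity one. -/
/-- A nonnegative real square matrix is irreducible if its adjacency graph is strongly
connected; equivalently, for all `i j` some power of `M` has a positive `(i,j)` entry. -/
def Matrix.IsIrreducible' {m : ℕ} (M : Matrix (Fin m) (Fin m) ℝ) : Prop :=
  ∀ i j : Fin m, ∃ n : ℕ, 0 < (M ^ (n + 1)) i j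

/-- The characteristic polynomial of a real matrix, viewed over `ℂ`; its roots are the
complex eigenvalues of `M`, and `rootMultiplicity` gives the algebraic multiplicity. -/
noncomputable def Matrix.complexCharpoly {m : ℕ} (M : Matrix (Fin m) (Fin m) ℝ) :
    Polynomial ℂ :=
  (M.map (algebraMap ℝ ℂ)).charpoly


open Matrix Polynomial Finset Filter

namespace PerronFrobeniusAux

variable {m : ℕ}

/-- Entries of powers of an entrywise-nonnegative matrix are nonnegative. -/
lemma pow_entry_nonneg (M : Matrix (Fin m) (Fin m) ℝ) (hnn : ∀ i j, 0 ≤ M i j) (k : ℕ) :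
    ∀ i j, 0 ≤ (M ^ k) i j := by
  induction k with
  | zero =>
    intro i j
    by_cases h : i = j <;> simp [pow_zero, Matrix.one_apply, h]
  | succ k ih =>
    intro i j
    rw [pow_succ, Matrix.mul_apply]
    exact Finset.sum_nonneg fun l _ => mul_nonneg (ih i l) (hnn l j)

/-- A strictly positive polynomial in `M` (with nonnegative powers) exists for an
irreducible nonnegative matrix: the sum of the first several powers of `M`. -/
lemma exists_P (M : Matrix (Fin m) (Fin m) ℝ) (hnn : ∀ i j, 0 ≤ M i j)
    (hirr : M.IsIrreducible') :
    ∃ P : Matrix (Fin m) (Fin m) ℝ, (∀ i j, 0 < P i j) ∧ M * P = P * M ∧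
      ∃ N : ℕ, P = ∑ k ∈ Finset.range (N + 1), M ^ k := by
  classical
  choose f hf using hirr
  set N := Finset.univ.sup (fun p : Fin m × Fin m => f p.1 p.2 + 1) with hN
  refine ⟨∑ k ∈ Finset.range (N + 1), M ^ k, ?_, ?_, N, rfl⟩
  · intro i j
    have hle : f i j + 1 ≤ N :=
      Finset.le_sup (f := fun p : Fin m × Fin m => f p.1 p.2 + 1) (Finset.mem_univ (i, j))
    have hmem : f i j + 1 ∈ Finset.range (N + 1) := Finset.mem_range.mpr (by omega)
    have hsum := Finset.single_le_sum (f := fun k => (M ^ k) i j)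
      (fun k _ => pow_entry_nonneg M hnn k i j) hmem
    have hpos := hf i j
    have : (∑ k ∈ Finset.range (N + 1), M ^ k) i j
        = ∑ k ∈ Finset.range (N + 1), (M ^ k) i j := by
      simp [Matrix.sum_apply]
    rw [this]
    exact lt_of_lt_of_le hpos hsum
  · rw [Finset.mul_sum, Finset.sum_mul]
    refine Finset.sum_congr rfl fun k _ => ?_
    rw [← pow_succ', pow_succ]

/-- If every row of `M` has a positive entry (via irreducibility), `z` is nonnegative and
positive somewhere times a positive matrix gives positive entries. -/
lemma mulVec_pos (P : Matrix (Fin m) (Fin m) ℝ) (hP : ∀ i j, 0 < P i j)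
    (z : Fin m → ℝ) (hz : ∀ i, 0 ≤ z i) (hz0 : z ≠ 0) (i : Fin m) :
    0 < (P *ᵥ z) i := by
  obtain ⟨j0, hj0⟩ : ∃ j, 0 < z j := by
    by_contra h
    push_neg at h
    exact hz0 (funext fun j => le_antisymm (h j) (hz j))
  have : (P *ᵥ z) i = ∑ j, P i j * z j := by
    simp [Matrix.mulVec, dotProduct]
  rw [this]
  exact Finset.sum_pos' (fun j _ => mul_nonneg (hP i j).le (hz j))
    ⟨j0, Finset.mem_univ _, mul_pos (hP i j0) hj0⟩

/-- Evaluation of the characteristic polynomial. -/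
lemma eval_charpoly {n : Type*} [Fintype n] [DecidableEq n] {R : Type*} [CommRing R]
    (A : Matrix n n R) (t : R) : A.charpoly.eval t = (t • (1 : Matrix n n R) - A).det := by
  have : A.charpoly.eval t = (Polynomial.evalRingHom t) A.charpoly := rfl
  rw [this, Matrix.charpoly, RingHom.map_det]
  congr 1
  ext i j
  by_cases h : i = j <;>
    simp [h, Matrix.charmatrix_apply, Matrix.one_apply, Matrix.sub_apply, Matrix.smul_apply,
      Matrix.diagonal_apply]

/-- Shift of the characteristic polynomial. -/
lemma charpoly_sub_smul_one {n : Type*} [Fintype n] [DecidableEq n] {R : Type*} [CommRing R]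
    (A : Matrix n n R) (μ : R) :
    (A - μ • (1 : Matrix n n R)).charpoly = A.charpoly.comp (X + C μ) := by
  rw [Matrix.charpoly]
  calc (Matrix.charmatrix (A - μ • (1 : Matrix n n R))).det
      = ((Polynomial.eval₂RingHom (Polynomial.C : R →+* R[X]) (X + C μ)).mapMatrix
          (Matrix.charmatrix A)).det := by
        congr 1
        refine Matrix.ext fun i j => ?_
        by_cases h : i = j
        · simp only [h, Matrix.charmatrix_apply, Matrix.one_apply_eq, Matrix.sub_apply,
            Matrix.smul_apply, Matrix.diagonal_apply_eq, RingHom.mapMatrix_apply,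
            Matrix.map_apply, map_sub, Polynomial.coe_eval₂RingHom, Polynomial.eval₂_X,
            Polynomial.eval₂_C, smul_eq_mul, mul_one, Polynomial.eval₂_sub]
          ring
        · simp only [h, Matrix.charmatrix_apply, Matrix.one_apply_ne h, Matrix.sub_apply,
            Matrix.smul_apply, Matrix.diagonal_apply_ne _ h, RingHom.mapMatrix_apply,
            Matrix.map_apply, map_sub, Polynomial.coe_eval₂RingHom, Polynomial.eval₂_X,
            Polynomial.eval₂_C, smul_eq_mul, mul_zero, Polynomial.eval₂_sub,
            Polynomial.eval₂_zero, zero_sub, sub_zero, neg_neg, Polynomial.eval₂_neg]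
    _ = (Polynomial.eval₂RingHom (Polynomial.C : R →+* R[X]) (X + C μ))
          (Matrix.charmatrix A).det := (RingHom.map_det _ _).symm
    _ = A.charpoly.comp (X + C μ) := rfl

/-- charpoly of transpose. -/
lemma charpoly_transpose {n : Type*} [Fintype n] [DecidableEq n] {R : Type*} [CommRing R]
    (A : Matrix n n R) : (Aᵀ).charpoly = A.charpoly := by
  rw [Matrix.charpoly, Matrix.charpoly, ← Matrix.det_transpose (Matrix.charmatrix A)]
  congr 1
  refine Matrix.ext fun i j => ?_
  by_cases h : i = j
  · simp [h, Matrix.charmatrix_apply]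
  · simp [Matrix.charmatrix_apply, Matrix.transpose_apply, Matrix.diagonal_apply_ne _ h,
      Matrix.diagonal_apply_ne _ (fun h' => h (h'.symm))]

/-- Gelfand-formula based bound: a positive vector with `M *ᵥ u ≥ c • u`, `c` above all
eigenvalue moduli, is impossible. -/
lemma no_subinvariant_above (hm : 0 < m) (M : Matrix (Fin m) (Fin m) ℝ)
    (hnn : ∀ i j, 0 ≤ M i j) (lam c : ℝ)
    (hroot : ∀ μ : ℂ, (M.map (algebraMap ℝ ℂ)).charpoly.IsRoot μ → ‖μ‖ ≤ lam)
    (hlam : 0 ≤ lam) (hc : lam < c) (u : Fin m → ℝ) (hu : ∀ i, 0 < u i)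
    (hineq : ∀ i, c * u i ≤ (M *ᵥ u) i) : False := by
  classical
  have hne : Nonempty (Fin m) := ⟨⟨0, hm⟩⟩
  set Mc := M.map (algebraMap ℝ ℂ) with hMc
  letI : NormedRing (Matrix (Fin m) (Fin m) ℂ) := Matrix.linftyOpNormedRing
  letI : NormedAlgebra ℂ (Matrix (Fin m) (Fin m) ℂ) := Matrix.linftyOpNormedAlgebra
  haveI : CompleteSpace (Matrix (Fin m) (Fin m) ℂ) := FiniteDimensional.complete ℂ _
  have hc0 : 0 < c := lt_of_le_of_lt hlam hc
  set c' : ℝ := (lam + c) / 2 with hc'def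
  have hc'0 : 0 < c' := by positivity
  have hlamc' : lam < c' := by rw [hc'def]; linarith
  have hc'c : c' < c := by rw [hc'def]; linarith
  -- spectral radius bound
  have hspec : spectralRadius ℂ Mc ≤ ENNReal.ofReal lam := by
    rw [spectralRadius]
    refine iSup₂_le fun μ hμ => ?_
    have hdet : ((algebraMap ℂ (Matrix (Fin m) (Fin m) ℂ)) μ - Mc).det = 0 := by
      have hnu := spectrum.mem_iff.mp hμ
      by_contra hd
      exact hnu ((Matrix.isUnit_iff_isUnit_det _).mpr (isUnit_iff_ne_zero.mpr hd))
    have hroot' : Mc.charpoly.IsRoot μ := by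
      rw [Polynomial.IsRoot, eval_charpoly]
      rw [Algebra.algebraMap_eq_smul_one] at hdet
      exact hdet
    have habs : ‖μ‖ ≤ lam := by
      have := hroot μ hroot'
      exact this
    calc (‖μ‖₊ : ENNReal) = ENNReal.ofReal ‖μ‖ := (ofReal_norm μ).symm
      _ ≤ ENNReal.ofReal lam := ENNReal.ofReal_le_ofReal habs
  have hls := spectrum.limsup_pow_nnnorm_pow_one_div_le_spectralRadius Mc
  have hlt : Filter.limsup (fun n : ℕ => (‖Mc ^ n‖₊ : ENNReal) ^ (1 / (n : ℝ))) atTop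
      < ENNReal.ofReal c' :=
    lt_of_le_of_lt (le_trans hls hspec)
      ((ENNReal.ofReal_lt_ofReal_iff hc'0).mpr hlamc')
  have hev := Filter.eventually_lt_of_limsup_lt hlt
  -- lower bound by induction
  have hMk : ∀ k : ℕ, ∀ i, c ^ k * u i ≤ ((M ^ k) *ᵥ u) i := by
    intro k
    induction k with
    | zero => intro i; simp
    | succ k ih =>
      intro i
      have h1 : ((M ^ (k + 1)) *ᵥ u) i = (M *ᵥ ((M ^ k) *ᵥ u)) i := by
        rw [Matrix.mulVec_mulVec, ← pow_succ']
      rw [h1]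
      have h2 : (M *ᵥ (fun j => c ^ k * u j)) i ≤ (M *ᵥ ((M ^ k) *ᵥ u)) i := by
        simp only [Matrix.mulVec, dotProduct]
        exact Finset.sum_le_sum fun j _ => mul_le_mul_of_nonneg_left (ih j) (hnn i j)
      calc c ^ (k + 1) * u i = c ^ k * (c * u i) := by ring
        _ ≤ c ^ k * (M *ᵥ u) i :=
            mul_le_mul_of_nonneg_left (hineq i) (pow_nonneg hc0.le k)
        _ = (M *ᵥ (fun j => c ^ k * u j)) i := by
            simp only [Matrix.mulVec, dotProduct, Finset.mul_sum]
            exact Finset.sum_congr rfl fun j _ => by ring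
        _ ≤ _ := h2
  -- min and max of u
  obtain ⟨i1, _, hi1⟩ := Finset.exists_mem_eq_inf' (Finset.univ_nonempty (α := Fin m)) u
  obtain ⟨i2, _, hi2⟩ := Finset.exists_mem_eq_sup' (Finset.univ_nonempty (α := Fin m)) u
  set umin := u i1 with humin
  set umax := u i2 with humax
  have humin0 : 0 < umin := hu i1
  have humax0 : 0 < umax := hu i2
  have hule : ∀ j, u j ≤ umax := by
    intro j
    have h := Finset.le_sup' u (Finset.mem_univ j)
    rw [hi2] at h
    exact h
  -- norm lower bound
  have hMck : ∀ k : ℕ, Mc ^ k = (M ^ k).map (algebraMap ℝ ℂ) := by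
    intro k
    have h0 : Mc = (algebraMap ℝ ℂ).mapMatrix M := rfl
    rw [h0, ← map_pow]
    rfl
  have hnorm : ∀ k : ℕ, c ^ k * umin ≤ ‖Mc ^ k‖ * umax := by
    intro k
    have hrow : ∑ j, (M ^ k) i1 j ≤ ‖Mc ^ k‖ := by
      have h1 : (‖Mc ^ k‖₊ : ℝ) = ‖Mc ^ k‖ := rfl
      have h2 : (∑ j, ‖(Mc ^ k) i1 j‖₊ : NNReal) ≤ ‖Mc ^ k‖₊ := by
        rw [Matrix.linfty_opNNNorm_def]
        exact Finset.le_sup (f := fun i => ∑ j, ‖(Mc ^ k) i j‖₊) (Finset.mem_univ i1)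
      have h3 : ∑ j, (M ^ k) i1 j = ((∑ j, ‖(Mc ^ k) i1 j‖₊ : NNReal) : ℝ) := by
        push_cast
        refine Finset.sum_congr rfl fun j _ => ?_
        rw [hMck k]
        simp only [Matrix.map_apply]
        rw [Complex.coe_algebraMap, Complex.norm_real]
        exact (abs_of_nonneg (pow_entry_nonneg M hnn k i1 j)).symm
      rw [h3, ← h1]
      exact_mod_cast h2
    calc c ^ k * umin ≤ ((M ^ k) *ᵥ u) i1 := hMk k i1
      _ = ∑ j, (M ^ k) i1 j * u j := by simp [Matrix.mulVec, dotProduct]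
      _ ≤ ∑ j, (M ^ k) i1 j * umax :=
          Finset.sum_le_sum fun j _ => mul_le_mul_of_nonneg_left (hule j)
            (pow_entry_nonneg M hnn k i1 j)
      _ = (∑ j, (M ^ k) i1 j) * umax := by rw [Finset.sum_mul]
      _ ≤ ‖Mc ^ k‖ * umax := mul_le_mul_of_nonneg_right hrow humax0.le
  -- eventually the (c/c')^n beats umax/umin
  have hq : 1 < c / c' := (one_lt_div hc'0).mpr hc'c
  have htend : Filter.Tendsto (fun n : ℕ => (c / c') ^ n) atTop atTop :=
    tendsto_pow_atTop_atTop_of_one_lt hq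
  have hev2 : ∀ᶠ n : ℕ in atTop, umax / umin < (c / c') ^ n :=
    htend.eventually_gt_atTop _
  obtain ⟨n, hn1, hn2, hn3⟩ :=
    ((eventually_ge_atTop 1).and (hev.and hev2)).exists
  -- convert upper bound
  have hupper : ‖Mc ^ n‖ ≤ c' ^ n := by
    set x : ENNReal := (‖Mc ^ n‖₊ : ENNReal) with hx
    have hxn : x = (x ^ (1 / (n : ℝ))) ^ (n : ℕ) := by
      rw [← ENNReal.rpow_natCast (x ^ (1 / (n : ℝ))) n, ← ENNReal.rpow_mul, one_div,
        inv_mul_cancel₀ (Nat.cast_ne_zero.mpr (by omega) : (n : ℝ) ≠ 0),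
        ENNReal.rpow_one]
    have hxle : x ≤ (ENNReal.ofReal c') ^ n := by
      rw [hxn]
      exact pow_le_pow_left' hn2.le n
    rw [← ENNReal.ofReal_pow hc'0.le] at hxle
    rw [hx, ← ENNReal.ofReal_coe_nnreal, coe_nnnorm] at hxle
    exact (ENNReal.ofReal_le_ofReal_iff (p := ‖Mc ^ n‖) (by positivity : (0:ℝ) ≤ c' ^ n)).mp hxle
  have hfinal : c ^ n * umin ≤ c' ^ n * umax :=
    le_trans (hnorm n) (mul_le_mul_of_nonneg_right hupper humax0.le)
  have hgt : c' ^ n * umax < c ^ n * umin := by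
    have h1 : umax / umin < (c / c') ^ n := hn3
    have h2 : (c / c') ^ n = c ^ n / c' ^ n := div_pow c c' n
    rw [h2, lt_div_iff₀ (by positivity), div_mul_eq_mul_div, div_lt_iff₀ humin0] at h1
    linarith
  linarith

/-- Key step: a nonnegative nonzero subinvariant vector is actually an eigenvector. -/
lemma subeigen_eq (hm : 0 < m) (M : Matrix (Fin m) (Fin m) ℝ)
    (hnn : ∀ i j, 0 ≤ M i j) (hirr : M.IsIrreducible') (lam : ℝ)
    (hroot : ∀ μ : ℂ, (M.map (algebraMap ℝ ℂ)).charpoly.IsRoot μ → ‖μ‖ ≤ lam)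
    (hlam : 0 ≤ lam) (z : Fin m → ℝ) (hz : ∀ i, 0 ≤ z i) (hz0 : z ≠ 0)
    (hsub : ∀ i, lam * z i ≤ (M *ᵥ z) i) : M *ᵥ z = lam • z := by
  classical
  have hne : Nonempty (Fin m) := ⟨⟨0, hm⟩⟩
  by_contra hneq
  obtain ⟨P, hPpos, hPcomm, N, hPdef⟩ := exists_P M hnn hirr
  set w : Fin m → ℝ := M *ᵥ z - lam • z with hw
  have hw0 : ∀ i, 0 ≤ w i := by
    intro i
    have : w i = (M *ᵥ z) i - lam * z i := rfl
    rw [this]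
    linarith [hsub i]
  have hwne : w ≠ 0 := by
    intro h
    apply hneq
    have := sub_eq_zero.mp h
    exact this
  set u : Fin m → ℝ := P *ᵥ z with hu
  have hupos : ∀ i, 0 < u i := fun i => mulVec_pos P hPpos z hz hz0 i
  have hPw : ∀ i, 0 < (P *ᵥ w) i := fun i => mulVec_pos P hPpos w hw0 hwne i
  have hMz : M *ᵥ z = lam • z + w := by
    rw [hw]; abel
  have hMu : M *ᵥ u = lam • u + P *ᵥ w := by
    rw [hu, Matrix.mulVec_mulVec, hPcomm, ← Matrix.mulVec_mulVec, hMz,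
      Matrix.mulVec_add, Matrix.mulVec_smul]
  set ε : ℝ := Finset.inf' Finset.univ (Finset.univ_nonempty (α := Fin m))
    (fun i => (P *ᵥ w) i / u i) with hε
  have hε0 : 0 < ε := by
    rw [hε, Finset.lt_inf'_iff]
    exact fun i _ => div_pos (hPw i) (hupos i)
  have hεle : ∀ i, ε ≤ (P *ᵥ w) i / u i := fun i =>
    Finset.inf'_le _ (Finset.mem_univ i)
  refine no_subinvariant_above hm M hnn lam (lam + ε) hroot hlam (by linarith) u hupos ?_
  intro i
  have h1 : ε * u i ≤ (P *ᵥ w) i := by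
    have := mul_le_mul_of_nonneg_right (hεle i) (hupos i).le
    rwa [div_mul_cancel₀ _ (hupos i).ne'] at this
  have h2 : (M *ᵥ u) i = lam * u i + (P *ᵥ w) i := by
    rw [hMu]; rfl
  rw [h2]
  nlinarith [hupos i]

/-- Main existence lemma. -/
lemma exists_perron (hm : 0 < m) (M : Matrix (Fin m) (Fin m) ℝ)
    (hnn : ∀ i j, 0 ≤ M i j) (hirr : M.IsIrreducible') :
    ∃ (lam : ℝ) (u : Fin m → ℝ), 0 < lam ∧ (∀ i, 0 < u i) ∧ M *ᵥ u = lam • u ∧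
      M.complexCharpoly.IsRoot (lam : ℂ) ∧
      ∀ μ : ℂ, M.complexCharpoly.IsRoot μ → ‖μ‖ ≤ lam := by
  classical
  have hne : Nonempty (Fin m) := ⟨⟨0, hm⟩⟩
  set Mc := M.map (algebraMap ℝ ℂ) with hMc
  have hcc : M.complexCharpoly = Mc.charpoly := rfl
  have hp0 : Mc.charpoly ≠ 0 := (Matrix.charpoly_monic Mc).ne_zero
  have hdeg : Mc.charpoly.natDegree = m := by
    rw [Matrix.charpoly_natDegree_eq_dim, Fintype.card_fin]
  have hcard : Multiset.card Mc.charpoly.roots = m := by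
    have h := Polynomial.splits_iff_card_roots.mp
      (IsAlgClosed.splits Mc.charpoly)
    rw [hdeg] at h
    exact h
  have hSne : Mc.charpoly.roots.toFinset.Nonempty := by
    rw [Multiset.toFinset_nonempty]
    intro h
    rw [h] at hcard
    simp only [Multiset.card_zero] at hcard
    omega
  set lam : ℝ := Mc.charpoly.roots.toFinset.sup' hSne (fun μ => ‖μ‖) with hlamdef
  obtain ⟨μ₀, hμ₀S, hμ₀⟩ := Finset.exists_mem_eq_sup' hSne (fun μ => ‖μ‖)
  have hbound : ∀ μ : ℂ, Mc.charpoly.IsRoot μ → ‖μ‖ ≤ lam := by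
    intro μ hroot
    have hmem : μ ∈ Mc.charpoly.roots.toFinset :=
      Multiset.mem_toFinset.mpr ((Polynomial.mem_roots hp0).mpr hroot)
    exact Finset.le_sup' (fun μ => ‖μ‖) hmem
  have hlam0 : 0 ≤ lam := by
    rw [hlamdef, hμ₀]
    exact norm_nonneg _
  have hμ₀root : Mc.charpoly.IsRoot μ₀ :=
    Polynomial.isRoot_of_mem_roots (Multiset.mem_toFinset.mp hμ₀S)
  have hdet : (μ₀ • (1 : Matrix (Fin m) (Fin m) ℂ) - Mc).det = 0 := by
    rw [← eval_charpoly]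
    exact hμ₀root
  obtain ⟨x, hx0, hxv⟩ := Matrix.exists_mulVec_eq_zero_iff.mpr hdet
  have hxe : Mc *ᵥ x = μ₀ • x := by
    have h1 : (μ₀ • (1 : Matrix (Fin m) (Fin m) ℂ) - Mc) *ᵥ x = μ₀ • x - Mc *ᵥ x := by
      rw [Matrix.sub_mulVec, Matrix.smul_mulVec, Matrix.one_mulVec]
    rw [h1] at hxv
    exact (sub_eq_zero.mp hxv).symm
  set z : Fin m → ℝ := fun i => ‖x i‖ with hz
  have hz0 : ∀ i, 0 ≤ z i := fun i => norm_nonneg _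
  have hzne : z ≠ 0 := by
    intro h
    apply hx0
    funext i
    have h2 : z i = 0 := congrFun h i
    rw [hz] at h2
    exact norm_eq_zero.mp h2
  have hsub : ∀ i, lam * z i ≤ (M *ᵥ z) i := by
    intro i
    have h1 : lam * z i = ‖(Mc *ᵥ x) i‖ := by
      rw [hxe]
      have h2 : (μ₀ • x) i = μ₀ * x i := rfl
      rw [h2, norm_mul, hlamdef, hμ₀]
    rw [h1]
    have h2 : (Mc *ᵥ x) i = ∑ j, (M i j : ℂ) * x j := by
      simp [hMc, Matrix.mulVec, dotProduct, Matrix.map_apply]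
    rw [h2]
    calc ‖∑ j, (M i j : ℂ) * x j‖ ≤ ∑ j, ‖(M i j : ℂ) * x j‖ :=
          norm_sum_le _ _
      _ = ∑ j, M i j * z j := by
          refine Finset.sum_congr rfl fun j _ => ?_
          rw [norm_mul, Complex.norm_real, Real.norm_eq_abs, abs_of_nonneg (hnn i j)]
      _ = (M *ᵥ z) i := by simp [Matrix.mulVec, dotProduct]
  have heig := subeigen_eq hm M hnn hirr lam hbound hlam0 z hz0 hzne hsub
  obtain ⟨P, hPpos, hPcomm, N, hPdef⟩ := exists_P M hnn hirr
  set u : Fin m → ℝ := P *ᵥ z with hu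
  have hupos : ∀ i, 0 < u i := fun i => mulVec_pos P hPpos z hz0 hzne i
  have hMu : M *ᵥ u = lam • u := by
    rw [hu, Matrix.mulVec_mulVec, hPcomm, ← Matrix.mulVec_mulVec, heig, Matrix.mulVec_smul]
  have hrowpos : ∀ i, ∃ j, 0 < M i j := by
    intro i
    by_contra h
    push_neg at h
    have hrow0 : ∀ j, M i j = 0 := fun j => le_antisymm (h j) (hnn i j)
    obtain ⟨n, hn⟩ := hirr i i
    have hzero : (M ^ (n + 1)) i i = 0 := by
      rw [pow_succ', Matrix.mul_apply]
      exact Finset.sum_eq_zero fun l _ => by rw [hrow0 l, zero_mul]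
    rw [hzero] at hn
    exact lt_irrefl 0 hn
  have hlampos : 0 < lam := by
    rcases hlam0.lt_or_eq with h | h
    · exact h
    · exfalso
      obtain ⟨j, hj⟩ := hrowpos ⟨0, hm⟩
      have h1 : (M *ᵥ u) ⟨0, hm⟩ = 0 := by
        rw [hMu, ← h, zero_smul]
        rfl
      have h2 : 0 < (M *ᵥ u) ⟨0, hm⟩ := by
        have h3 : (M *ᵥ u) ⟨0, hm⟩ = ∑ l, M ⟨0, hm⟩ l * u l := by
          simp [Matrix.mulVec, dotProduct]
        rw [h3]
        exact Finset.sum_pos' (fun l _ => mul_nonneg (hnn _ l) (hupos l).le)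
          ⟨j, Finset.mem_univ _, mul_pos hj (hupos j)⟩
      linarith
  have hune : u ≠ 0 := by
    intro h
    have := congrFun h ⟨0, hm⟩
    have h2 := hupos ⟨0, hm⟩
    rw [this] at h2
    exact lt_irrefl 0 h2
  have hdetR : (lam • (1 : Matrix (Fin m) (Fin m) ℝ) - M).det = 0 := by
    refine Matrix.exists_mulVec_eq_zero_iff.mp ⟨u, hune, ?_⟩
    rw [Matrix.sub_mulVec, Matrix.smul_mulVec, Matrix.one_mulVec, hMu, sub_self]
  have hroot : M.complexCharpoly.IsRoot (lam : ℂ) := by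
    rw [hcc, Polynomial.IsRoot, eval_charpoly]
    have hmap : ((lam : ℂ) • (1 : Matrix (Fin m) (Fin m) ℂ) - Mc)
        = (algebraMap ℝ ℂ).mapMatrix (lam • (1 : Matrix (Fin m) (Fin m) ℝ) - M) := by
      refine Matrix.ext fun i j => ?_
      by_cases h : i = j <;>
        simp [h, hMc, Matrix.sub_apply, Matrix.smul_apply, Matrix.one_apply,
          RingHom.mapMatrix_apply, Matrix.map_apply]
    rw [hmap, ← RingHom.map_det, hdetR, map_zero]
  refine ⟨lam, u, hlampos, hupos, hMu, hroot, ?_⟩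
  rw [hcc]
  exact hbound

/-- Uniqueness of the real eigenvector. -/
lemma real_eigvec_unique (hm : 0 < m) (M : Matrix (Fin m) (Fin m) ℝ)
    (hnn : ∀ i j, 0 ≤ M i j) (hirr : M.IsIrreducible') (lam : ℝ) (hlam : 0 < lam)
    (u : Fin m → ℝ) (hu : ∀ i, 0 < u i) (huM : M *ᵥ u = lam • u)
    (v : Fin m → ℝ) (hv : M *ᵥ v = lam • v) : ∃ c : ℝ, v = c • u := by
  classical
  have hne : Nonempty (Fin m) := ⟨⟨0, hm⟩⟩
  obtain ⟨P, hPpos, hPcomm, N, hPdef⟩ := exists_P M hnn hirr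
  obtain ⟨i0, _, hi0⟩ := Finset.exists_mem_eq_inf' (Finset.univ_nonempty (α := Fin m))
    (fun i => v i / u i)
  set c : ℝ := Finset.inf' Finset.univ (Finset.univ_nonempty (α := Fin m))
    (fun i => v i / u i) with hc
  refine ⟨c, ?_⟩
  set w : Fin m → ℝ := v - c • u with hwdef
  have hwi : ∀ i, w i = v i - c * u i := fun i => rfl
  have hw0 : ∀ i, 0 ≤ w i := by
    intro i
    have h1 : c ≤ v i / u i := Finset.inf'_le _ (Finset.mem_univ i)
    have h2 := mul_le_mul_of_nonneg_right h1 (hu i).le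
    rw [div_mul_cancel₀ _ (hu i).ne'] at h2
    rw [hwi]
    linarith
  have hwi0 : w i0 = 0 := by
    have h1 : c = v i0 / u i0 := hi0
    rw [hwi, h1, div_mul_cancel₀ _ (hu i0).ne', sub_self]
  have hMw : M *ᵥ w = lam • w := by
    rw [hwdef, Matrix.mulVec_sub, Matrix.mulVec_smul, hv, huM, smul_sub, smul_comm]
  suffices hws : w = 0 by
    rw [hwdef] at hws
    have := sub_eq_zero.mp hws
    exact this
  by_contra hwne
  have hMkw : ∀ k, (M ^ k) *ᵥ w = (lam ^ k) • w := by
    intro k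
    induction k with
    | zero => simp [Matrix.one_mulVec]
    | succ k ih =>
      rw [pow_succ', ← Matrix.mulVec_mulVec, ih, Matrix.mulVec_smul, hMw, pow_succ',
        mul_smul, smul_comm]
  have hsum : (∑ k ∈ Finset.range (N + 1), (M ^ k)) *ᵥ w
      = (∑ k ∈ Finset.range (N + 1), lam ^ k) • w := by
    have h1 : (∑ k ∈ Finset.range (N + 1), (M ^ k)) *ᵥ w
        = ∑ k ∈ Finset.range (N + 1), ((M ^ k) *ᵥ w) := by
      funext i
      simp only [Matrix.mulVec, dotProduct, Matrix.sum_apply, Finset.sum_apply,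
        Finset.sum_mul]
      rw [Finset.sum_comm]
    rw [h1]
    rw [Finset.sum_congr rfl fun k _ => hMkw k, ← Finset.sum_smul]
  have hPpos' := mulVec_pos P hPpos w hw0 hwne i0
  rw [hPdef, hsum] at hPpos'
  have : ((∑ k ∈ Finset.range (N + 1), lam ^ k) • w) i0
      = (∑ k ∈ Finset.range (N + 1), lam ^ k) * w i0 := rfl
  rw [this, hwi0, mul_zero] at hPpos'
  exact lt_irrefl 0 hPpos'

end PerronFrobeniusAux

/-- Perron–Frobenius theorem, part I(a): an irreducible nonnegative real square matrix has
a positive real eigenvalue `lam` dominating all complex eigenvalues in absolute value, of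
algebraic multiplicity one. -/
theorem perron_frobenius_exists {m : ℕ} (hm : 0 < m) (M : Matrix (Fin m) (Fin m) ℝ)
    (hnn : ∀ i j, 0 ≤ M i j) (hirr : M.IsIrreducible') :
    ∃ lam : ℝ, 0 < lam ∧ M.complexCharpoly.IsRoot (lam : ℂ) ∧
      (∀ μ : ℂ, M.complexCharpoly.IsRoot μ → ‖μ‖ ≤ lam) ∧
      M.complexCharpoly.rootMultiplicity (lam : ℂ) = 1 := by
  classical
  have hne : Nonempty (Fin m) := ⟨⟨0, hm⟩⟩
  obtain ⟨lam, u, hlam, hu, huM, hroot, hbound⟩ :=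
    PerronFrobeniusAux.exists_perron hm M hnn hirr
  refine ⟨lam, hlam, hroot, hbound, ?_⟩
  -- transpose data
  have hnnT : ∀ i j, 0 ≤ Mᵀ i j := fun i j => hnn j i
  have hirrT : Mᵀ.IsIrreducible' := by
    intro i j
    obtain ⟨n, h⟩ := hirr j i
    exact ⟨n, by rw [← Matrix.transpose_pow]; exact h⟩
  obtain ⟨lamT, v, hlamT, hv, hvM, hrootT, hboundT⟩ :=
    PerronFrobeniusAux.exists_perron hm Mᵀ hnnT hirrT
  have hTc : Mᵀ.complexCharpoly = M.complexCharpoly := by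
    rw [Matrix.complexCharpoly, Matrix.complexCharpoly]
    have h1 : Mᵀ.map (algebraMap ℝ ℂ) = (M.map (algebraMap ℝ ℂ))ᵀ := rfl
    rw [h1, PerronFrobeniusAux.charpoly_transpose]
  have habs : ∀ t : ℝ, 0 < t → ‖(t : ℂ)‖ = t := fun t ht => by
    rw [Complex.norm_real, Real.norm_eq_abs, abs_of_pos ht]
  have hlamT_eq : lamT = lam := by
    apply le_antisymm
    · have h1 := hbound (lamT : ℂ) (by rw [← hTc]; exact hrootT)
      rwa [habs lamT hlamT] at h1
    · have h1 := hboundT (lam : ℂ) (by rw [hTc]; exact hroot)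
      rwa [habs lam hlam] at h1
  rw [hlamT_eq] at hvM
  -- complex versions
  set Mc : Matrix (Fin m) (Fin m) ℂ := M.map (algebraMap ℝ ℂ) with hMc
  have hcc : M.complexCharpoly = Mc.charpoly := rfl
  set uC : Fin m → ℂ := fun i => (u i : ℂ) with huC
  have hMcV : ∀ (y : Fin m → ℝ) (i : Fin m),
      (Mc *ᵥ (fun j => (y j : ℂ))) i = ((M *ᵥ y) i : ℂ) := by
    intro y i
    simp only [Matrix.mulVec, dotProduct, hMc, Matrix.map_apply]
    push_cast
    rfl
  have hMcu : Mc *ᵥ uC = (lam : ℂ) • uC := by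
    funext i
    rw [huC, hMcV u i, huM]
    have h1 : (lam • u) i = lam * u i := rfl
    rw [h1]
    push_cast
    rfl
  have huC0 : uC ≠ 0 := by
    intro h
    have h1 := congrFun h ⟨0, hm⟩
    rw [huC] at h1
    have h2 := hu ⟨0, hm⟩
    simp only [Complex.ofReal_eq_zero, Pi.zero_apply] at h1
    rw [h1] at h2
    exact lt_irrefl 0 h2
  -- complex eigenvectors are multiples of uC
  have hcxeig : ∀ x : Fin m → ℂ, Mc *ᵥ x = (lam : ℂ) • x → ∃ c : ℂ, x = c • uC := by
    intro x hx
    set a : Fin m → ℝ := fun i => (x i).re with ha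
    set b : Fin m → ℝ := fun i => (x i).im with hb
    have hxab : ∀ i, x i = (a i : ℂ) + (b i : ℂ) * Complex.I := fun i =>
      (Complex.re_add_im (x i)).symm
    have hmv : ∀ i, (Mc *ᵥ x) i = ∑ j, (M i j : ℂ) * x j := by
      intro i
      simp [hMc, Matrix.mulVec, dotProduct, Matrix.map_apply]
    have hare : ∀ i, ((Mc *ᵥ x) i).re = (M *ᵥ a) i := by
      intro i
      rw [hmv i, Complex.re_sum]
      simp only [Complex.mul_re, Complex.ofReal_re, Complex.ofReal_im, zero_mul, sub_zero]
      rfl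
    have haim : ∀ i, ((Mc *ᵥ x) i).im = (M *ᵥ b) i := by
      intro i
      rw [hmv i, Complex.im_sum]
      simp only [Complex.mul_im, Complex.ofReal_re, Complex.ofReal_im, zero_mul, add_zero]
      rfl
    have hMa : M *ᵥ a = lam • a := by
      funext i
      have h1 := congrArg Complex.re (congrFun hx i)
      rw [hare i] at h1
      have h2 : (((lam : ℂ) • x) i).re = lam * a i := by
        simp [Complex.smul_re, ha]
      rw [h2] at h1
      exact h1
    have hMb : M *ᵥ b = lam • b := by
      funext i
      have h1 := congrArg Complex.im (congrFun hx i)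
      rw [haim i] at h1
      have h2 : (((lam : ℂ) • x) i).im = lam * b i := by
        simp [Complex.smul_im, hb]
      rw [h2] at h1
      exact h1
    obtain ⟨c1, hc1⟩ := PerronFrobeniusAux.real_eigvec_unique hm M hnn hirr lam hlam u hu huM a hMa
    obtain ⟨c2, hc2⟩ := PerronFrobeniusAux.real_eigvec_unique hm M hnn hirr lam hlam u hu huM b hMb
    refine ⟨(c1 : ℂ) + (c2 : ℂ) * Complex.I, ?_⟩
    funext i
    rw [hxab i, congrFun hc1 i, congrFun hc2 i]
    have h1 : ((c1 • u) i : ℂ) = (c1 : ℂ) * (u i : ℂ) := by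
      have h0 : (c1 • u) i = c1 * u i := rfl
      rw [h0]; push_cast; ring
    have h2 : ((c2 • u) i : ℂ) = (c2 : ℂ) * (u i : ℂ) := by
      have h0 : (c2 • u) i = c2 * u i := rfl
      rw [h0]; push_cast; ring
    rw [h1, h2]
    have h3 : (((c1 : ℂ) + (c2 : ℂ) * Complex.I) • uC) i
        = ((c1 : ℂ) + (c2 : ℂ) * Complex.I) * (u i : ℂ) := rfl
    rw [h3]
    ring
  -- pairing with the left eigenvector
  have hdot : ∀ x : Fin m → ℂ,
      ∑ i, (v i : ℂ) * (Mc *ᵥ x) i = (lam : ℂ) * ∑ i, (v i : ℂ) * x i := by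
    intro x
    have hmv : ∀ i, (Mc *ᵥ x) i = ∑ j, (M i j : ℂ) * x j := by
      intro i
      simp [hMc, Matrix.mulVec, dotProduct, Matrix.map_apply]
    calc ∑ i, (v i : ℂ) * (Mc *ᵥ x) i
        = ∑ i, ∑ j, (v i : ℂ) * ((M i j : ℂ) * x j) := by
          refine Finset.sum_congr rfl fun i _ => ?_
          rw [hmv i, Finset.mul_sum]
      _ = ∑ j, (∑ i, (v i : ℂ) * (M i j : ℂ)) * x j := by
          rw [Finset.sum_comm]
          refine Finset.sum_congr rfl fun j _ => ?_
          rw [Finset.sum_mul]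
          refine Finset.sum_congr rfl fun i _ => ?_
          ring
      _ = ∑ j, ((lam : ℂ) * (v j : ℂ)) * x j := by
          refine Finset.sum_congr rfl fun j _ => ?_
          congr 1
          have h1 : ∑ i, (v i : ℂ) * (M i j : ℂ) = (((Mᵀ *ᵥ v) j : ℝ) : ℂ) := by
            simp only [Matrix.mulVec, dotProduct, Matrix.transpose_apply]
            push_cast
            refine Finset.sum_congr rfl fun i _ => ?_
            ring
          rw [h1, hvM]
          have h2 : (lam • v) j = lam * v j := rfl
          rw [h2]
          push_cast
          rfl
      _ = (lam : ℂ) * ∑ i, (v i : ℂ) * x i := by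
          rw [Finset.mul_sum]
          refine Finset.sum_congr rfl fun j _ => ?_
          ring
  have hvu : (∑ i, (v i : ℂ) * uC i) ≠ 0 := by
    have h1 : ∑ i, (v i : ℂ) * uC i = ((∑ i, v i * u i : ℝ) : ℂ) := by
      push_cast
      rfl
    rw [h1]
    rw [Complex.ofReal_ne_zero]
    have h2 : 0 < ∑ i, v i * u i :=
      Finset.sum_pos (fun i _ => mul_pos (hv i) (hu i)) Finset.univ_nonempty
    exact h2.ne'
  -- the shifted matrix
  set Bc : Matrix (Fin m) (Fin m) ℂ := Mc - (lam : ℂ) • 1 with hBc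
  have hBcV : ∀ x : Fin m → ℂ, Bc *ᵥ x = Mc *ᵥ x - (lam : ℂ) • x := by
    intro x
    rw [hBc, Matrix.sub_mulVec, Matrix.smul_mulVec, Matrix.one_mulVec]
  have hBcu : Bc *ᵥ uC = 0 := by
    rw [hBcV, hMcu, sub_self]
  have hker2 : ∀ x : Fin m → ℂ, Bc *ᵥ (Bc *ᵥ x) = 0 → Bc *ᵥ x = 0 := by
    intro x hxx
    set y : Fin m → ℂ := Bc *ᵥ x with hy
    have hyeig : Mc *ᵥ y = (lam : ℂ) • y := by
      have h2 : Bc *ᵥ y = 0 := hxx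
      rw [hBcV y] at h2
      exact sub_eq_zero.mp h2
    obtain ⟨c, hc⟩ := hcxeig y hyeig
    have hdy : ∑ i, (v i : ℂ) * y i = 0 := by
      rw [hy]
      have h1 : ∀ i, (Bc *ᵥ x) i = (Mc *ᵥ x) i - (lam : ℂ) * x i := by
        intro i
        rw [hBcV x]
        rfl
      calc ∑ i, (v i : ℂ) * (Bc *ᵥ x) i
          = ∑ i, ((v i : ℂ) * (Mc *ᵥ x) i - (lam : ℂ) * ((v i : ℂ) * x i)) := by
            refine Finset.sum_congr rfl fun i _ => ?_
            rw [h1 i]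
            ring
        _ = ∑ i, (v i : ℂ) * (Mc *ᵥ x) i - (lam : ℂ) * ∑ i, (v i : ℂ) * x i := by
            rw [Finset.sum_sub_distrib, Finset.mul_sum]
        _ = 0 := by rw [hdot x]; ring
    have hc0 : c = 0 := by
      rw [hc] at hdy
      have h2 : ∑ i, (v i : ℂ) * (c • uC) i = c * ∑ i, (v i : ℂ) * uC i := by
        rw [Finset.mul_sum]
        refine Finset.sum_congr rfl fun i _ => ?_
        have : (c • uC) i = c * uC i := rfl
        rw [this]
        ring
      rw [h2] at hdy
      exact (mul_eq_zero.mp hdy).resolve_right hvu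
    rw [hy] at hc ⊢
    rw [hc, hc0, zero_smul]
  have hkerk : ∀ (k : ℕ) (x : Fin m → ℂ), (Bc ^ (k + 1)) *ᵥ x = 0 → Bc *ᵥ x = 0 := by
    intro k
    induction k with
    | zero => intro x h; rwa [pow_one] at h
    | succ k ih =>
      intro x h
      apply ih
      have h1 : (Bc ^ (k + 2)) *ᵥ x = Bc *ᵥ (Bc *ᵥ ((Bc ^ k) *ᵥ x)) := by
        rw [Matrix.mulVec_mulVec, Matrix.mulVec_mulVec]
        congr 1
        rw [pow_succ', pow_succ', mul_assoc]
      rw [h1] at h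
      have h2 := hker2 ((Bc ^ k) *ᵥ x) h
      rw [Matrix.mulVec_mulVec, ← pow_succ'] at h2
      exact h2
  -- linear-algebra reformulation
  set φ : Module.End ℂ (Fin m → ℂ) := Matrix.toLinAlgEquiv' Bc with hφ
  have hφpow : ∀ (k : ℕ) (x : Fin m → ℂ), (φ ^ k) x = (Bc ^ k) *ᵥ x := by
    intro k x
    rw [hφ, ← map_pow]
    rfl
  have hφchar : LinearMap.charpoly φ = Bc.charpoly := by
    have h1 := LinearMap.charpoly_toMatrix φ (Pi.basisFun ℂ (Fin m))
    rw [LinearMap.toMatrix_eq_toMatrix'] at h1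
    rw [← h1]
    congr 1
    rw [hφ]
    exact LinearMap.toMatrixAlgEquiv'_toLinAlgEquiv' Bc
  have hmax : φ.maxGenEigenspace 0 = Submodule.span ℂ {uC} := by
    ext x
    rw [Module.End.mem_maxGenEigenspace, Submodule.mem_span_singleton]
    constructor
    · rintro ⟨k, hk⟩
      simp only [zero_smul, sub_zero] at hk
      rw [hφpow k x] at hk
      cases k with
      | zero =>
        rw [pow_zero, Matrix.one_mulVec] at hk
        exact ⟨0, by rw [hk, zero_smul]⟩
      | succ k =>
        have h1 := hkerk k x hk
        have h2 : Mc *ᵥ x = (lam : ℂ) • x := by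
          rw [hBcV x] at h1
          exact sub_eq_zero.mp h1
        obtain ⟨c, hc⟩ := hcxeig x h2
        exact ⟨c, hc.symm⟩
    · rintro ⟨c, hc⟩
      refine ⟨1, ?_⟩
      simp only [zero_smul, sub_zero, pow_one]
      have h1 : φ x = Bc *ᵥ x := by
        have := hφpow 1 x
        rwa [pow_one, pow_one] at this
      rw [h1, ← hc, Matrix.mulVec_smul, hBcu, smul_zero]
  have hrank : Module.finrank ℂ (φ.maxGenEigenspace 0) = 1 := by
    rw [hmax]
    exact finrank_span_singleton huC0
  -- put everything together
  rw [hcc, Polynomial.rootMultiplicity_eq_natTrailingDegree,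
    ← PerronFrobeniusAux.charpoly_sub_smul_one Mc (lam : ℂ), ← hBc, ← hφchar,
    ← LinearMap.finrank_maxGenEigenspace_zero_eq, hrank]
end

section
/- If M is an irreducible nonnegative real square matrix with Perron–Frobenius eigenvalue λ, then there exists a positive integer h such that the set of eigenvalues μ of M with |μ| = λ is exactly { exp(2πik/h)·λ : k = 0, …, h−1 }. -/
open Polynomial Matrix Finset

namespace PFaux

variable {m : ℕ}

lemma eval_charpoly' (N : Matrix (Fin m) (Fin m) ℂ) (x : ℂ) :
    N.charpoly.eval x = (x • (1 : Matrix (Fin m) (Fin m) ℂ) - N).det := by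
  rw [Matrix.charpoly, eval_det, matPolyEquiv_charmatrix]
  simp [Matrix.smul_one_eq_diagonal]

lemma isRoot_charpoly_iff (N : Matrix (Fin m) (Fin m) ℂ) (x : ℂ) :
    N.charpoly.IsRoot x ↔ ∃ v ≠ 0, N.mulVec v = x • v := by
  rw [Polynomial.IsRoot, eval_charpoly', ← Matrix.exists_mulVec_eq_zero_iff]
  apply exists_congr; intro v
  constructor
  · rintro ⟨hv, h⟩
    refine ⟨hv, ?_⟩
    rw [Matrix.sub_mulVec, Matrix.smul_mulVec, Matrix.one_mulVec, sub_eq_zero] at h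
    exact h.symm
  · rintro ⟨hv, h⟩
    exact ⟨hv, by rw [Matrix.sub_mulVec, Matrix.smul_mulVec, Matrix.one_mulVec, h, sub_self]⟩

lemma pow_root {n : ℕ} (hn : 0 < n) (N : Matrix (Fin m) (Fin m) ℂ) (ν : ℂ)
    (h : (N ^ n).charpoly.IsRoot ν) : ∃ s : ℂ, N.charpoly.IsRoot s ∧ s ^ n = ν := by
  have hdet : (N ^ n - ν • 1).det = 0 := by
    have h1 : (ν • (1 : Matrix (Fin m) (Fin m) ℂ) - N ^ n).det = 0 := by
      rw [← eval_charpoly']; exact h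
    have h2 : N ^ n - ν • 1 = -(ν • 1 - N ^ n) := by abel
    rw [h2, det_neg, h1, mul_zero]
  set p : Polynomial ℂ := X ^ n - C ν with hp
  have hpm : p.Monic := monic_X_pow_sub_C ν hn.ne'
  have hps : p = (p.roots.toList.map fun r => X - C r).prod := by
    conv_lhs => rw [(IsAlgClosed.splits p).eq_prod_roots_of_monic hpm]
    rw [← Multiset.coe_toList p.roots, Multiset.map_coe, Multiset.prod_coe]
    simp
  have haev : aeval N p = N ^ n - ν • 1 := by
    simp [hp, Algebra.algebraMap_eq_smul_one]
  have e1 : (p.roots.toList.map fun r => aeval N (X - C r)).prod = N ^ n - ν • 1 := by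
    rw [← haev]
    conv_rhs => rw [hps]
    rw [map_list_prod, List.map_map]
    rfl
  have e2 : (p.roots.toList.map fun r => (aeval N (X - C r)).det).prod = 0 := by
    have h3 := congrArg Matrix.det e1
    rw [hdet, ← Matrix.coe_detMonoidHom, map_list_prod, List.map_map] at h3
    exact h3
  rw [List.prod_eq_zero_iff, List.mem_map] at e2
  obtain ⟨r, hr, hd0⟩ := e2
  refine ⟨r, ?_, ?_⟩
  · have h4 : (aeval N (X - C r)).det = ((-1 : ℂ) ^ m) * (r • 1 - N).det := by
      have h5 : aeval N (X - C r) = -(r • (1 : Matrix (Fin m) (Fin m) ℂ) - N) := by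
        simp only [map_sub, aeval_X, aeval_C, Algebra.algebraMap_eq_smul_one]
        abel
      rw [h5, det_neg]; simp
    rw [h4] at hd0
    have h6 : (r • (1 : Matrix (Fin m) (Fin m) ℂ) - N).det = 0 := by
      rcases mul_eq_zero.mp hd0 with h' | h'
      · exact absurd h' (by simp [pow_ne_zero])
      · exact h'
    rwa [Polynomial.IsRoot, eval_charpoly']
  · have h7 := isRoot_of_mem_roots (Multiset.mem_toList.mp hr)
    simpa [hp, sub_eq_zero] using h7

lemma pow_entry_nonneg (M : Matrix (Fin m) (Fin m) ℝ) (hnn : ∀ i j, 0 ≤ M i j) (n : ℕ) :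
    ∀ i j, 0 ≤ (M ^ n) i j := by
  induction n with
  | zero =>
      intro i j
      rw [pow_zero]
      by_cases h : i = j <;> simp [Matrix.one_apply, h]
  | succ n ih =>
      intro i j
      rw [pow_succ, Matrix.mul_apply]
      exact Finset.sum_nonneg fun k _ => mul_nonneg (ih i k) (hnn k j)

/-- bound on the trace of powers via the dominant eigenvalue bound -/
lemma trace_pow_bound (N : Matrix (Fin m) (Fin m) ℂ) (lam : ℝ) (hl : 0 ≤ lam)
    (hdom : ∀ μ : ℂ, N.charpoly.IsRoot μ → ‖μ‖ ≤ lam)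
    {n : ℕ} (hn : 0 < n) : ‖(N ^ n).trace‖ ≤ m * lam ^ n := by
  rcases Nat.eq_zero_or_pos m with hm | hm
  · subst hm
    simp [Matrix.trace]
  have htr : (N ^ n).trace = (N ^ n).charpoly.roots.sum :=
    Matrix.trace_eq_sum_roots_charpoly _
  rw [htr]
  have hcard : Multiset.card (N ^ n).charpoly.roots = m := by
    have h1 : (N ^ n).charpoly.natDegree = m := by
      simpa using (N ^ n).charpoly_natDegree_eq_dim
    exact (splits_iff_card_roots.mp (IsAlgClosed.splits _)).trans h1
  calc ‖(N ^ n).charpoly.roots.sum‖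
      ≤ ((N ^ n).charpoly.roots.map (‖·‖)).sum := by
        simpa using norm_multiset_sum_le (N ^ n).charpoly.roots
    _ ≤ Multiset.card ((N ^ n).charpoly.roots.map (‖·‖)) • (lam ^ n) := by
        apply Multiset.sum_le_card_nsmul
        intro x hx
        rw [Multiset.mem_map] at hx
        obtain ⟨r, hr, rfl⟩ := hx
        have hroot : (N ^ n).charpoly.IsRoot r := isRoot_of_mem_roots hr
        obtain ⟨s, hs, rfl⟩ := pow_root hn N r hroot
        rw [norm_pow]
        exact pow_le_pow_left₀ (norm_nonneg s) (hdom s hs) n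
    _ = m * lam ^ n := by
        rw [Multiset.card_map, hcard]; rw [nsmul_eq_mul]

/-- There is no strictly super-`lam` subinvariant positive vector. -/
lemma no_growth (M : Matrix (Fin m) (Fin m) ℝ) (hm : 0 < m) (hnn : ∀ i j, 0 ≤ M i j)
    (hirr : M.IsIrreducible') (lam : ℝ) (hpos : 0 < lam)
    (hdom : ∀ μ : ℂ, M.complexCharpoly.IsRoot μ → ‖μ‖ ≤ lam)
    (u : Fin m → ℝ) (hu : ∀ i, 0 < u i) (t : ℝ) (ht : lam < t)
    (hMu : ∀ i, t * u i ≤ M.mulVec u i) : False := by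
  have ht0 : 0 < t := hpos.trans ht
  set N : Matrix (Fin m) (Fin m) ℂ := M.map (algebraMap ℝ ℂ) with hN
  -- trace of real powers
  have htrace : ∀ {k : ℕ}, 0 < k → (M ^ k).trace ≤ m * lam ^ k := by
    intro k hk
    have h1 : N ^ k = (M ^ k).map (algebraMap ℝ ℂ) := by
      rw [hN, ← RingHom.mapMatrix_apply, ← RingHom.mapMatrix_apply, ← map_pow]
    have h2 : (N ^ k).trace = ((M ^ k).trace : ℂ) := by
      rw [h1, Matrix.trace, Matrix.trace]
      push_cast
      simp [Matrix.diag, Matrix.map_apply]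
    have h3 := trace_pow_bound N lam hpos.le hdom hk
    rw [h2] at h3
    rw [Complex.norm_real, Real.norm_eq_abs] at h3
    exact (le_abs_self _).trans h3
  -- power subinvariance
  have hpow : ∀ (n : ℕ) (i : Fin m), t ^ n * u i ≤ (M ^ n).mulVec u i := by
    intro n
    induction n with
    | zero => intro i; simp [Matrix.one_mulVec]
    | succ n ih =>
        intro i
        have h1 : (M ^ (n + 1)).mulVec u = M.mulVec ((M ^ n).mulVec u) := by
          rw [pow_succ']
          rw [← Matrix.mulVec_mulVec]
        rw [h1]
        have h2 : t ^ n * (M.mulVec u i) ≤ M.mulVec ((M ^ n).mulVec u) i := by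
          rw [Matrix.mulVec, Matrix.mulVec, dotProduct, dotProduct, Finset.mul_sum]
          apply Finset.sum_le_sum
          intro j _
          rw [mul_left_comm]
          exact mul_le_mul_of_nonneg_left (ih j) (hnn i j)
        calc t ^ (n + 1) * u i = t ^ n * (t * u i) := by ring
          _ ≤ t ^ n * (M.mulVec u i) :=
              mul_le_mul_of_nonneg_left (hMu i) (pow_nonneg ht0.le n)
          _ ≤ _ := h2
  set i0 : Fin m := ⟨0, hm⟩
  choose p hp using fun j => hirr j i0
  set q : Fin m → ℝ := fun j => (M ^ (p j + 1)) j i0 * u i0 / (m * u j) with hq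
  have hqpos : ∀ j, 0 < q j := by
    intro j
    apply div_pos (mul_pos (hp j) (hu i0))
    exact mul_pos (by exact_mod_cast hm) (hu j)
  obtain ⟨j0, _, hj0⟩ := Finset.exists_min_image Finset.univ q ⟨i0, Finset.mem_univ i0⟩
  obtain ⟨j1, _, hj1⟩ := Finset.exists_max_image Finset.univ (fun j : Fin m => lam ^ (p j + 1))
    ⟨i0, Finset.mem_univ i0⟩
  have key : ∀ n : ℕ, q j0 * t ^ n ≤ (m * lam ^ (p j1 + 1)) * lam ^ n := by
    intro n
    -- find a large entry in row i0 of M ^ n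
    have h1 : ∑ j : Fin m, t ^ n * u i0 / m ≤ ∑ j : Fin m, (M ^ n) i0 j * u j := by
      rw [Finset.sum_const, Finset.card_univ, Fintype.card_fin]
      have : (m : ℝ) * (t ^ n * u i0 / m) = t ^ n * u i0 := by
        field_simp
      rw [nsmul_eq_mul, this]
      exact hpow n i0
    obtain ⟨j, _, hj⟩ := Finset.exists_le_of_sum_le ⟨i0, Finset.mem_univ i0⟩ h1
    -- large diagonal entry of M ^ (n + p j + 1)
    have h2 : (M ^ n) i0 j * (M ^ (p j + 1)) j i0 ≤ (M ^ (n + (p j + 1))) i0 i0 := by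
      conv_rhs => rw [pow_add, Matrix.mul_apply]
      exact Finset.single_le_sum
        (fun k _ => mul_nonneg (pow_entry_nonneg M hnn n i0 k)
          (pow_entry_nonneg M hnn (p j + 1) k i0)) (Finset.mem_univ j)
    have h3 : (M ^ (n + (p j + 1))) i0 i0 ≤ (M ^ (n + (p j + 1))).trace := by
      apply Finset.single_le_sum (fun k _ => pow_entry_nonneg M hnn _ k k) (Finset.mem_univ i0)
    have h4 := htrace (k := n + (p j + 1)) (by omega)
    have h5 : q j * t ^ n ≤ (M ^ n) i0 j * (M ^ (p j + 1)) j i0 := by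
      rw [hq]
      have huj := hu j
      have h6 : t ^ n * u i0 / m ≤ (M ^ n) i0 j * u j := hj
      calc (M ^ (p j + 1)) j i0 * u i0 / (m * u j) * t ^ n
          = (M ^ (p j + 1)) j i0 * (t ^ n * u i0 / m) / u j := by ring
        _ ≤ (M ^ (p j + 1)) j i0 * ((M ^ n) i0 j * u j) / u j := by
            apply (div_le_div_iff_of_pos_right huj).mpr
            exact mul_le_mul_of_nonneg_left h6 (pow_entry_nonneg M hnn _ j i0)
        _ = (M ^ n) i0 j * (M ^ (p j + 1)) j i0 := by field_simp
    have h7 : (m : ℝ) * lam ^ (n + (p j + 1)) ≤ (m * lam ^ (p j1 + 1)) * lam ^ n := by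
      rw [pow_add]
      calc (m : ℝ) * (lam ^ n * lam ^ (p j + 1)) = (m * lam ^ (p j + 1)) * lam ^ n := by ring
        _ ≤ (m * lam ^ (p j1 + 1)) * lam ^ n := by
            apply mul_le_mul_of_nonneg_right ?_ (pow_nonneg hpos.le n)
            exact mul_le_mul_of_nonneg_left (hj1 j (Finset.mem_univ j)) (by positivity)
    calc q j0 * t ^ n ≤ q j * t ^ n :=
          mul_le_mul_of_nonneg_right (hj0 j (Finset.mem_univ j)) (pow_nonneg ht0.le n)
      _ ≤ (M ^ n) i0 j * (M ^ (p j + 1)) j i0 := h5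
      _ ≤ (M ^ (n + (p j + 1))) i0 i0 := h2
      _ ≤ (M ^ (n + (p j + 1))).trace := h3
      _ ≤ m * lam ^ (n + (p j + 1)) := h4
      _ ≤ (m * lam ^ (p j1 + 1)) * lam ^ n := h7
  -- contradiction
  have hrat : (1 : ℝ) < t / lam := (one_lt_div hpos).mpr ht
  obtain ⟨n, hn⟩ := pow_unbounded_of_one_lt ((m * lam ^ (p j1 + 1)) / q j0) hrat
  have h8 := key n
  rw [div_pow] at hn
  rw [div_lt_div_iff₀ (hqpos j0) (pow_pos hpos n)] at hn
  have h9 : (m * lam ^ (p j1 + 1)) * lam ^ n < q j0 * t ^ n := by linarith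
  exact absurd h8 (not_le.mpr h9)

-- appended to pf.lean inside namespace PFaux (for testing, separate file with same preamble)
lemma sub_inv (M : Matrix (Fin m) (Fin m) ℝ) (hnn : ∀ i j, 0 ≤ M i j)
    (hirr : M.IsIrreducible') (lam : ℝ) (hpos : 0 < lam)
    (hdom : ∀ μ : ℂ, M.complexCharpoly.IsRoot μ → ‖μ‖ ≤ lam)
    (z : Fin m → ℝ) (hz : ∀ i, 0 ≤ z i) (hz0 : z ≠ 0)
    (hsub : ∀ i, lam * z i ≤ M.mulVec z i) :
    M.mulVec z = lam • z ∧ ∀ i, 0 < z i := by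
  have hm : 0 < m := by
    rcases Nat.eq_zero_or_pos m with h | h
    · exfalso; apply hz0; subst h; funext i; exact absurd i.2 (Nat.not_lt_zero _)
    · exact h
  classical
  choose f hf using fun i j => hirr i j
  set K : ℕ := Finset.univ.sup (fun ij : Fin m × Fin m => f ij.1 ij.2) with hK
  set A : Matrix (Fin m) (Fin m) ℝ := ∑ k ∈ Finset.range (K + 2), M ^ k with hA
  have hAnn : ∀ i j, 0 ≤ A i j := by
    intro i j
    rw [hA, Matrix.sum_apply]
    exact Finset.sum_nonneg fun k _ => pow_entry_nonneg M hnn k i j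
  have hApos : ∀ i j, 0 < A i j := by
    intro i j
    have hmem : f i j + 1 ∈ Finset.range (K + 2) := by
      rw [Finset.mem_range]
      have : f i j ≤ K := Finset.le_sup (f := fun ij : Fin m × Fin m => f ij.1 ij.2)
        (Finset.mem_univ (i, j))
      omega
    have := Finset.single_le_sum (f := fun k => (M ^ k) i j)
      (fun k _ => pow_entry_nonneg M hnn k i j) hmem
    have h2 : (A i j : ℝ) = ∑ k ∈ Finset.range (K + 2), (M ^ k) i j := by
      rw [hA, Matrix.sum_apply]
    rw [h2]
    exact lt_of_lt_of_le (hf i j) this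
  have hAmul : ∀ v : Fin m → ℝ, (∀ i, 0 ≤ v i) → v ≠ 0 → ∀ i, 0 < A.mulVec v i := by
    intro v hv hv0 i
    obtain ⟨j0, hj0⟩ := Function.ne_iff.mp hv0
    have hj0' : 0 < v j0 := lt_of_le_of_ne (hv j0) (Ne.symm hj0)
    have : A i j0 * v j0 ≤ A.mulVec v i := by
      rw [Matrix.mulVec, dotProduct]
      exact Finset.single_le_sum (fun k _ => mul_nonneg (hAnn i k) (hv k)) (Finset.mem_univ j0)
    exact lt_of_lt_of_le (mul_pos (hApos i j0) hj0') this
  have hcomm : A * M = M * A := by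
    rw [hA, Finset.sum_mul, Finset.mul_sum]
    apply Finset.sum_congr rfl
    intro k _
    rw [← pow_succ, ← pow_succ']
  by_cases hw0 : M.mulVec z = lam • z
  · refine ⟨hw0, ?_⟩
    -- positivity
    have hMk : ∀ k : ℕ, (M ^ k).mulVec z = (lam ^ k) • z := by
      intro k
      induction k with
      | zero => simp [Matrix.one_mulVec]
      | succ k ih =>
          rw [pow_succ', ← Matrix.mulVec_mulVec, ih, Matrix.mulVec_smul, hw0, smul_smul,
            pow_succ']
          rw [mul_comm]
    have hAz : ∀ i, A.mulVec z i = (∑ k ∈ Finset.range (K + 2), lam ^ k) * z i := by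
      intro i
      calc A.mulVec z i = ∑ j, (∑ k ∈ Finset.range (K + 2), (M ^ k) i j) * z j := by
            rw [Matrix.mulVec, dotProduct]
            apply Finset.sum_congr rfl
            intro j _
            rw [hA, Matrix.sum_apply]
        _ = ∑ k ∈ Finset.range (K + 2), ∑ j, (M ^ k) i j * z j := by
            rw [Finset.sum_comm]
            apply Finset.sum_congr rfl
            intro j _
            rw [Finset.sum_mul]
        _ = ∑ k ∈ Finset.range (K + 2), lam ^ k * z i := by
            apply Finset.sum_congr rfl
            intro k _
            have h := congrFun (hMk k) i
            simpa [Matrix.mulVec, dotProduct] using h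
        _ = (∑ k ∈ Finset.range (K + 2), lam ^ k) * z i := by rw [Finset.sum_mul]
    intro i
    have h1 : 0 < A.mulVec z i := hAmul z hz hz0 i
    rw [hAz i] at h1
    have hc : 0 < ∑ k ∈ Finset.range (K + 2), lam ^ k :=
      Finset.sum_pos (fun k _ => pow_pos hpos k) (by simp)
    nlinarith [hz i]
  · exfalso
    set w : Fin m → ℝ := fun i => M.mulVec z i - lam * z i with hwdef
    have hwnn : ∀ i, 0 ≤ w i := fun i => sub_nonneg.mpr (hsub i)
    have hwne : w ≠ 0 := by
      intro hcontr
      apply hw0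
      funext i
      have := congrFun hcontr i
      simp only [hwdef, Pi.zero_apply] at this
      have : M.mulVec z i = lam * z i := by linarith
      simpa [Pi.smul_apply, smul_eq_mul] using this
    set u : Fin m → ℝ := A.mulVec z with hu
    have hupos : ∀ i, 0 < u i := hAmul z hz hz0
    set w' : Fin m → ℝ := A.mulVec w with hw'
    have hw'pos : ∀ i, 0 < w' i := hAmul w hwnn hwne
    -- M u = lam • u + w'
    have hkey : ∀ i, M.mulVec u i = lam * u i + w' i := by
      intro i
      have h1 : M.mulVec u = A.mulVec (M.mulVec z) := by
        rw [hu, Matrix.mulVec_mulVec, ← hcomm, ← Matrix.mulVec_mulVec]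
      have h2 : M.mulVec z = (fun i => lam * z i + w i) := by
        funext i; simp [hwdef]
      rw [h1, h2]
      have h3 : A.mulVec (fun i => lam * z i + w i) i
          = lam * A.mulVec z i + A.mulVec w i := by
        rw [Matrix.mulVec, dotProduct]
        simp only [Matrix.mulVec, dotProduct, Finset.mul_sum, ← Finset.sum_add_distrib]
        apply Finset.sum_congr rfl
        intro j _
        ring
      rw [h3]
    obtain ⟨i1, _, hi1⟩ := Finset.exists_min_image Finset.univ (fun i => w' i / u i)
      ⟨⟨0, hm⟩, Finset.mem_univ _⟩
    set δ : ℝ := w' i1 / u i1 with hδ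
    have hδpos : 0 < δ := div_pos (hw'pos i1) (hupos i1)
    apply no_growth M hm hnn hirr lam hpos hdom u hupos (lam + δ)
      (lt_add_of_pos_right lam hδpos)
    intro i
    have h4 : δ * u i ≤ w' i := by
      have h5 : δ ≤ w' i / u i := hi1 i (Finset.mem_univ i)
      rw [le_div_iff₀ (hupos i)] at h5
      linarith
    rw [hkey i]
    nlinarith [h4]

lemma re_eq_abs_imp {w : ℂ} (h : w.re = ‖w‖) : w = (‖w‖ : ℝ) := by
  have h2 : w.im = 0 := by
    have h3 : (‖w‖) ^ 2 = w.re ^ 2 + w.im ^ 2 := by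
      rw [Complex.sq_norm, Complex.normSq_apply]; ring
    rw [← h] at h3
    nlinarith
  apply Complex.ext
  · simp [h]
  · simp [h2]

lemma rotation (M : Matrix (Fin m) (Fin m) ℝ) (hnn : ∀ i j, 0 ≤ M i j)
    (hirr : M.IsIrreducible') (lam : ℝ) (hpos : 0 < lam)
    (hdom : ∀ μ : ℂ, M.complexCharpoly.IsRoot μ → ‖μ‖ ≤ lam)
    (μ : ℂ) (hμroot : M.complexCharpoly.IsRoot μ) (hμabs : ‖μ‖ = lam) :
    ∀ ν : ℂ, M.complexCharpoly.IsRoot ν → M.complexCharpoly.IsRoot (μ / lam * ν) := by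
  set N : Matrix (Fin m) (Fin m) ℂ := M.map (algebraMap ℝ ℂ) with hN
  have hNapp : ∀ i j, N i j = ((M i j : ℝ) : ℂ) := by
    intro i j; rw [hN, Matrix.map_apply]; rfl
  obtain ⟨y, hy0, heig⟩ := (isRoot_charpoly_iff N μ).mp hμroot
  have heig' : ∀ i, ∑ j, N i j * y j = μ * y i := by
    intro i
    have := congrFun heig i
    simpa [Matrix.mulVec, dotProduct] using this
  set z : Fin m → ℝ := fun i => ‖y i‖ with hz
  have hznn : ∀ i, 0 ≤ z i := fun i => norm_nonneg _
  have hz0 : z ≠ 0 := by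
    obtain ⟨i, hi⟩ := Function.ne_iff.mp hy0
    intro hc
    apply hi
    have := congrFun hc i
    simp only [hz, Pi.zero_apply] at this
    exact norm_eq_zero.mp this
  have habs_term : ∀ i j, ‖N i j * y j‖ = M i j * z j := by
    intro i j
    rw [norm_mul, hNapp, Complex.norm_real, Real.norm_eq_abs, abs_of_nonneg (hnn i j)]
  have hsub : ∀ i, lam * z i ≤ M.mulVec z i := by
    intro i
    have h1 : lam * z i = ‖μ * y i‖ := by
      rw [norm_mul, hμabs]
    rw [h1, ← heig' i]
    calc ‖∑ j, N i j * y j‖ ≤ ∑ j, ‖N i j * y j‖ :=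
          norm_sum_le _ _
      _ = ∑ j, M i j * z j := by
          apply Finset.sum_congr rfl; intro j _; exact habs_term i j
      _ = M.mulVec z i := rfl
  obtain ⟨heq, hzpos⟩ := sub_inv M hnn hirr lam hpos hdom z hznn hz0 hsub
  have heqi : ∀ i, ∑ j, M i j * z j = lam * z i := by
    intro i
    have := congrFun heq i
    simpa [Matrix.mulVec, dotProduct] using this
  -- triangle equality analysis
  have cross : ∀ i j, M i j ≠ 0 →
      ((lam * z i : ℝ) : ℂ) * y j = μ * y i * ((z j : ℝ) : ℂ) := by
    intro i j hij
    set s : ℂ := μ * y i with hs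
    have hsabs : ‖s‖ = lam * z i := by rw [hs, norm_mul, hμabs]
    have hspos : 0 < lam * z i := mul_pos hpos (hzpos i)
    have hterm : ∀ k, ((starRingEnd ℂ) s * (N i k * y k)).re ≤ (lam * z i) * (M i k * z k) := by
      intro k
      calc ((starRingEnd ℂ) s * (N i k * y k)).re ≤ ‖(starRingEnd ℂ) s * (N i k * y k)‖ :=
            Complex.re_le_norm _
        _ = (lam * z i) * (M i k * z k) := by
            rw [norm_mul, Complex.norm_conj, hsabs, habs_term]
    have hsum : ∑ k, ((starRingEnd ℂ) s * (N i k * y k)).re = ∑ k, (lam * z i) * (M i k * z k) := by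
      have h1 : ∑ k, ((starRingEnd ℂ) s * (N i k * y k)).re
          = ((starRingEnd ℂ) s * ∑ k, N i k * y k).re := by
        rw [Finset.mul_sum, Complex.re_sum]
      rw [h1, heig' i, ← hs]
      have h2 : ((starRingEnd ℂ) s * s).re = (‖s‖) ^ 2 := by
        rw [mul_comm, Complex.mul_conj]
        rw [Complex.normSq_eq_norm_sq]
        exact Complex.ofReal_re _
      rw [h2, hsabs]
      rw [← Finset.mul_sum, heqi i]
      ring
    have heach : ∀ k, ((starRingEnd ℂ) s * (N i k * y k)).re = (lam * z i) * (M i k * z k) := by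
      have h3 := Finset.sum_eq_zero_iff_of_nonneg
        (s := Finset.univ)
        (f := fun k => (lam * z i) * (M i k * z k) - ((starRingEnd ℂ) s * (N i k * y k)).re)
        (fun k _ => sub_nonneg.mpr (hterm k))
      have h4 : ∑ k, ((lam * z i) * (M i k * z k) - ((starRingEnd ℂ) s * (N i k * y k)).re) = 0 := by
        rw [Finset.sum_sub_distrib, hsum, sub_self]
      intro k
      have h5' : lam * z i * (M i k * z k) - ((starRingEnd ℂ) s * (N i k * y k)).re = 0 :=
        (h3.mp h4) k (Finset.mem_univ k)
      linarith
    -- conclude alignment for index j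
    have h5 : (starRingEnd ℂ) s * (N i j * y j) = (((lam * z i) * (M i j * z j) : ℝ) : ℂ) := by
      have h6 := heach j
      have h7 : ‖(starRingEnd ℂ) s * (N i j * y j)‖ = (lam * z i) * (M i j * z j) := by
        rw [norm_mul, Complex.norm_conj, hsabs, habs_term]
      have := re_eq_abs_imp (w := (starRingEnd ℂ) s * (N i j * y j)) (by rw [h6, ← h7])
      rw [this, h7]
    -- multiply by s
    have h8 : s * ((starRingEnd ℂ) s * (N i j * y j)) = s * (((lam * z i) * (M i j * z j) : ℝ) : ℂ) := by
      rw [h5]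
    have h9 : s * (starRingEnd ℂ) s = (((lam * z i) ^ 2 : ℝ) : ℂ) := by
      rw [Complex.mul_conj, Complex.normSq_eq_norm_sq, hsabs]
    have h10 : (((lam * z i) ^ 2 : ℝ) : ℂ) * (N i j * y j)
        = s * (((lam * z i) * (M i j * z j) : ℝ) : ℂ) := by
      rw [← h9]
      rw [← h8]
      ring
    -- cancel one factor of lam * z i and the factor M i j
    have hlz : ((lam * z i : ℝ) : ℂ) ≠ 0 := by
      exact_mod_cast hspos.ne'
    have hMij : ((M i j : ℝ) : ℂ) ≠ 0 := by exact_mod_cast hij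
    have h11 : ((lam * z i : ℝ) : ℂ) * (((M i j : ℝ) : ℂ) * y j)
        = s * (((M i j : ℝ) : ℂ) * ((z j : ℝ) : ℂ)) := by
      apply mul_left_cancel₀ hlz
      rw [hNapp] at h10
      push_cast at h10 ⊢
      ring_nf at h10 ⊢
      linear_combination h10
    apply mul_left_cancel₀ hMij
    push_cast at h11 ⊢
    linear_combination h11
  -- diagonal conjugation
  set d : Fin m → ℂ := fun i => y i / ((z i : ℝ) : ℂ) with hd
  have hzne : ∀ i, ((z i : ℝ) : ℂ) ≠ 0 := by
    intro i; exact_mod_cast (hzpos i).ne'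
  have hdne : ∀ i, d i ≠ 0 := by
    intro i
    rw [hd]
    apply div_ne_zero _ (hzne i)
    intro hc
    have : z i = 0 := by rw [hz]; simp [hc]
    exact (hzpos i).ne' this
  set ω : ℂ := μ / ((lam : ℝ) : ℂ) with hω
  have hlamne : ((lam : ℝ) : ℂ) ≠ 0 := by exact_mod_cast hpos.ne'
  have hNid : ∀ i j, N i j * d j = ω * d i * N i j := by
    intro i j
    by_cases hij : M i j = 0
    · rw [hNapp, hij]
      push_cast
      ring
    · have hc := cross i j hij
      push_cast at hc
      have hLZ : ((lam : ℝ) : ℂ) * ((z i : ℝ) : ℂ) ≠ 0 := mul_ne_zero hlamne (hzne i)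
      rw [hd, hω]
      have hr : μ / ((lam : ℝ) : ℂ) * (y i / ((z i : ℝ) : ℂ)) * N i j
          = (μ * y i * N i j) / (((lam : ℝ) : ℂ) * ((z i : ℝ) : ℂ)) := by
        field_simp
      rw [← mul_div_assoc, hr, div_eq_div_iff (hzne j) hLZ]
      linear_combination N i j * hc
  intro ν hν
  have hνdet : (ν • (1 : Matrix (Fin m) (Fin m) ℂ) - N).det = 0 := by
    rw [← eval_charpoly']; exact hν
  have key : ((ω * ν) • (1 : Matrix (Fin m) (Fin m) ℂ) - N) * Matrix.diagonal d
      = ω • (Matrix.diagonal d * (ν • (1 : Matrix (Fin m) (Fin m) ℂ) - N)) := by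
    ext i j
    rw [Matrix.mul_diagonal, Matrix.smul_apply, Matrix.diagonal_mul]
    rw [Matrix.sub_apply, Matrix.sub_apply, Matrix.smul_apply, Matrix.smul_apply]
    by_cases hij : i = j
    · subst hij
      rw [Matrix.one_apply_eq]
      have := hNid i i
      simp only [smul_eq_mul]
      linear_combination (-1 : ℂ) * this
    · rw [Matrix.one_apply_ne hij]
      have := hNid i j
      simp only [smul_eq_mul]
      linear_combination (-1 : ℂ) * this
  have hdetd : (Matrix.diagonal d).det ≠ 0 := by
    rw [Matrix.det_diagonal]
    exact Finset.prod_ne_zero_iff.mpr fun i _ => hdne i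
  have hdet2 := congrArg Matrix.det key
  rw [Matrix.det_mul, Matrix.det_smul, Matrix.det_mul, hνdet, mul_zero, mul_zero]
    at hdet2
  have h13 : ((ω * ν) • (1 : Matrix (Fin m) (Fin m) ℂ) - N).det = 0 := by
    rcases mul_eq_zero.mp hdet2 with h | h
    · exact h
    · exact absurd h hdetd
  show N.charpoly.IsRoot _
  rw [Polynomial.IsRoot, eval_charpoly']
  rw [hω] at h13
  exact h13

end PFaux

open PFaux Polynomial in
/-- Perron–Frobenius theorem: the eigenvalues of maximal absolute value of an irreducible
nonnegative real square matrix are exactly `exp(2πik/h)·lam`, `k = 0, …, h-1`, for some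
positive integer `h` (the period). -/
theorem dominant_eigenvalues_are_rotations {m : ℕ} (M : Matrix (Fin m) (Fin m) ℝ)
    (hnn : ∀ i j, 0 ≤ M i j) (hirr : M.IsIrreducible')
    (lam : ℝ) (hpos : 0 < lam) (hroot : M.complexCharpoly.IsRoot (lam : ℂ))
    (hdom : ∀ μ : ℂ, M.complexCharpoly.IsRoot μ → ‖μ‖ ≤ lam) :
    ∃ h : ℕ, 0 < h ∧ ∀ μ : ℂ,
      (M.complexCharpoly.IsRoot μ ∧ ‖μ‖ = lam) ↔
      (∃ k < h, μ = Complex.exp (2 * Real.pi * Complex.I * k / h) * lam) := by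
  classical
  rcases Nat.eq_zero_or_pos m with hm | hm
  · exfalso
    subst hm
    have h1 : M.complexCharpoly.eval ((lam : ℝ) : ℂ) = 1 := by
      rw [Matrix.complexCharpoly, Matrix.charpoly, Matrix.det_fin_zero]
      simp
    exact one_ne_zero (h1.symm.trans hroot)
  have hlamC : ((lam : ℝ) : ℂ) ≠ 0 := by exact_mod_cast hpos.ne'
  have hne : M.complexCharpoly ≠ 0 :=
    (Matrix.charpoly_monic (M.map (algebraMap ℝ ℂ))).ne_zero
  set Sf : Finset ℂ :=
    (M.complexCharpoly.roots.toFinset.filter (fun x => ‖x‖ = lam)) with hSf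
  have hmemS : ∀ x, x ∈ Sf ↔ (M.complexCharpoly.IsRoot x ∧ ‖x‖ = lam) := by
    intro x
    rw [hSf, Finset.mem_filter, Multiset.mem_toFinset, Polynomial.mem_roots']
    tauto
  set Tf : Finset ℂ := Sf.image (fun x => x / ((lam : ℝ) : ℂ)) with hTf
  have hlamS : ((lam : ℝ) : ℂ) ∈ Sf := (hmemS _).mpr
    ⟨hroot, by rw [Complex.norm_real, Real.norm_eq_abs, abs_of_pos hpos]⟩
  have h1T : (1 : ℂ) ∈ Tf := Finset.mem_image.mpr ⟨_, hlamS, div_self hlamC⟩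
  have hTmod : ∀ x ∈ Tf, ‖x‖ = 1 := by
    intro x hx
    rw [hTf, Finset.mem_image] at hx
    obtain ⟨μ, hμ, rfl⟩ := hx
    have := ((hmemS μ).mp hμ).2
    rw [norm_div, this, Complex.norm_real, Real.norm_eq_abs, abs_of_pos hpos, div_self hpos.ne']
  have hTne : ∀ x ∈ Tf, x ≠ 0 := by
    intro x hx hc
    have := hTmod x hx
    rw [hc] at this
    simp at this
  have hTmul : ∀ x ∈ Tf, ∀ x' ∈ Tf, x * x' ∈ Tf := by
    intro x hx x' hx'
    rw [hTf, Finset.mem_image] at hx hx'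
    obtain ⟨μ, hμ, rfl⟩ := hx
    obtain ⟨μ', hμ', rfl⟩ := hx'
    obtain ⟨hμr, hμa⟩ := (hmemS μ).mp hμ
    obtain ⟨hμ'r, hμ'a⟩ := (hmemS μ').mp hμ'
    have hr := rotation M hnn hirr lam hpos hdom μ hμr hμa μ' hμ'r
    have habs : ‖μ / ((lam : ℝ) : ℂ) * μ'‖ = lam := by
      rw [norm_mul, norm_div, hμa, hμ'a, Complex.norm_real, Real.norm_eq_abs, abs_of_pos hpos]
      field_simp
    have hmem : μ / ((lam : ℝ) : ℂ) * μ' ∈ Sf := (hmemS _).mpr ⟨hr, habs⟩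
    rw [hTf, Finset.mem_image]
    refine ⟨_, hmem, ?_⟩
    field_simp
  set h : ℕ := Tf.card with hh_def
  have hh : 0 < h := Finset.card_pos.mpr ⟨1, h1T⟩
  haveI : NeZero h := ⟨hh.ne'⟩
  have hpow1 : ∀ x ∈ Tf, x ^ h = 1 := by
    intro x hx
    have hxne : x ≠ 0 := hTne x hx
    have himg : Tf.image (fun y => x * y) = Tf := by
      apply Finset.eq_of_subset_of_card_le
      · intro y hy
        rw [Finset.mem_image] at hy
        obtain ⟨w, hw, rfl⟩ := hy
        exact hTmul x hx w hw
      · rw [Finset.card_image_of_injective _ (mul_right_injective₀ hxne)]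
    have hprod : ∏ y ∈ Tf, (x * y) = ∏ y ∈ Tf, y := by
      conv_rhs => rw [← himg]
      rw [Finset.prod_image (fun a _ b _ hab => mul_left_cancel₀ hxne hab)]
    rw [Finset.prod_mul_distrib, Finset.prod_const] at hprod
    have hP0 : ∏ y ∈ Tf, y ≠ 0 := Finset.prod_ne_zero_iff.mpr (fun y hy => hTne y hy)
    calc x ^ h = x ^ h * (∏ y ∈ Tf, y) * (∏ y ∈ Tf, y)⁻¹ := by
          field_simp
      _ = (∏ y ∈ Tf, y) * (∏ y ∈ Tf, y)⁻¹ := by rw [hprod]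
      _ = 1 := by field_simp
  have hζ := Complex.isPrimitiveRoot_exp h hh.ne'
  have hTsub : Tf ⊆ Polynomial.nthRootsFinset h (1 : ℂ) := fun x hx =>
    (Polynomial.mem_nthRootsFinset hh 1).mpr (hpow1 x hx)
  have hTeq : Tf = Polynomial.nthRootsFinset h (1 : ℂ) :=
    Finset.eq_of_subset_of_card_le hTsub (by rw [hζ.card_nthRootsFinset])
  refine ⟨h, hh, ?_⟩
  intro μ
  have hek : ∀ k : ℕ, Complex.exp (2 * Real.pi * Complex.I * k / h)
      = Complex.exp (2 * Real.pi * Complex.I / h) ^ k := by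
    intro k
    rw [← Complex.exp_nat_mul]
    congr 1
    ring
  constructor
  · rintro ⟨hr, ha⟩
    have hT : μ / ((lam : ℝ) : ℂ) ∈ Tf :=
      Finset.mem_image.mpr ⟨μ, (hmemS μ).mpr ⟨hr, ha⟩, rfl⟩
    have hmem := (Polynomial.mem_nthRootsFinset hh 1).mp (hTeq ▸ hT)
    obtain ⟨k, hk, hke⟩ := hζ.eq_pow_of_pow_eq_one hmem
    refine ⟨k, hk, ?_⟩
    rw [hek k, hke]
    field_simp
  · rintro ⟨k, hk, rfl⟩
    have hmem : Complex.exp (2 * Real.pi * Complex.I / h) ^ k ∈ Tf := by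
      rw [hTeq]
      apply (Polynomial.mem_nthRootsFinset hh 1).mpr
      rw [← pow_mul, mul_comm k h, pow_mul, hζ.pow_eq_one, one_pow]
    rw [hTf, Finset.mem_image] at hmem
    obtain ⟨μ', hμ', hμ'e⟩ := hmem
    obtain ⟨hμ'r, hμ'a⟩ := (hmemS μ').mp hμ'
    have heq : Complex.exp (2 * Real.pi * Complex.I * k / h) * ((lam : ℝ) : ℂ) = μ' := by
      rw [hek k, ← hμ'e]
      field_simp
    rw [heq]
    exact ⟨hμ'r, hμ'a⟩
end

section
/- If M is an irreducible nonnegative real square matrix with Perron–Frobenius eigenvalue λ, then there exist a right eigenvector v and a left eigenvector w of M for λ, both with all entries nonnegative, with wᵀv = 1. -/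
open Matrix Polynomial Filter

attribute [local instance] Matrix.linftyOpNormedAddCommGroup Matrix.linftyOpNormedRing
  Matrix.linftyOpNormedAlgebra

noncomputable section

namespace PFAux

variable {m : ℕ}

instance (k : ℕ) : CompleteSpace (Matrix (Fin k) (Fin k) ℂ) :=
  inferInstanceAs (CompleteSpace (Fin k → Fin k → ℂ))

lemma eval_charpoly {k : ℕ} (A : Matrix (Fin k) (Fin k) ℂ) (μ : ℂ) :
    A.charpoly.eval μ = (Matrix.scalar (Fin k) μ - A).det := by
  rw [Matrix.charpoly, eval_det, matPolyEquiv_charmatrix, eval_sub, eval_X, eval_C]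

lemma isRoot_of_mem_spectrum {k : ℕ} (A : Matrix (Fin k) (Fin k) ℂ) (μ : ℂ)
    (hμ : μ ∈ spectrum ℂ A) : A.charpoly.IsRoot μ := by
  rw [spectrum.mem_iff] at hμ
  rw [IsRoot, eval_charpoly]
  by_contra hdet
  exact hμ ((Matrix.isUnit_iff_isUnit_det _).mpr (isUnit_iff_ne_zero.mpr hdet))

lemma spectralRadius_le {k : ℕ} (A : Matrix (Fin k) (Fin k) ℂ) (lam : ℝ)
    (hdom : ∀ μ : ℂ, A.charpoly.IsRoot μ → ‖μ‖ ≤ lam) :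
    spectralRadius ℂ A ≤ ENNReal.ofReal lam := by
  rw [spectralRadius]
  refine iSup₂_le fun μ hμ => ?_
  have h := hdom μ (isRoot_of_mem_spectrum A μ hμ)
  rw [← enorm_eq_nnnorm, ← ofReal_norm]
  exact ENNReal.ofReal_le_ofReal h

lemma exists_complex_eigenvector {k : ℕ} (A : Matrix (Fin k) (Fin k) ℂ) (μ : ℂ)
    (hroot : A.charpoly.IsRoot μ) :
    ∃ z : Fin k → ℂ, z ≠ 0 ∧ A.mulVec z = μ • z := by
  have hdet : (Matrix.scalar (Fin k) μ - A).det = 0 := by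
    rw [← eval_charpoly]; exact hroot
  obtain ⟨z, hz, h⟩ := (Matrix.exists_mulVec_eq_zero_iff).mpr hdet
  refine ⟨z, hz, ?_⟩
  rw [Matrix.sub_mulVec] at h
  have hs : (Matrix.scalar (Fin k) μ).mulVec z = μ • z := by
    have : Matrix.scalar (Fin k) μ = μ • (1 : Matrix (Fin k) (Fin k) ℂ) := by
      rw [Matrix.scalar_apply, Matrix.smul_one_eq_diagonal]
    rw [this, Matrix.smul_mulVec, Matrix.one_mulVec]
  rw [hs] at h
  exact sub_eq_zero.mp h |>.symm ▸ (eq_of_sub_eq_zero h).symm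
lemma pow_nonneg (M : Matrix (Fin m) (Fin m) ℝ) (hnn : ∀ i j, 0 ≤ M i j) (n : ℕ) :
    ∀ i j, 0 ≤ (M ^ n) i j := by
  induction n with
  | zero => intro i j; by_cases h : i = j <;> simp [Matrix.one_apply, h]
  | succ n ih =>
    intro i j
    rw [pow_succ, Matrix.mul_apply]
    exact Finset.sum_nonneg fun l _ => mul_nonneg (ih i l) (hnn l j)

lemma mulVec_mono {N : Matrix (Fin m) (Fin m) ℝ} (hN : ∀ i j, 0 ≤ N i j)
    {p q : Fin m → ℝ} (h : ∀ i, p i ≤ q i) : ∀ i, N.mulVec p i ≤ N.mulVec q i := by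
  intro i
  simp only [Matrix.mulVec, dotProduct]
  exact Finset.sum_le_sum fun j _ => mul_le_mul_of_nonneg_left (h j) (hN i j)

lemma mulVec_nonneg {N : Matrix (Fin m) (Fin m) ℝ} (hN : ∀ i j, 0 ≤ N i j)
    {p : Fin m → ℝ} (h : ∀ i, 0 ≤ p i) : ∀ i, 0 ≤ N.mulVec p i := by
  intro i
  simp only [Matrix.mulVec, dotProduct]
  exact Finset.sum_nonneg fun j _ => mul_nonneg (hN i j) (h j)

lemma pow_mulVec_eigen {M : Matrix (Fin m) (Fin m) ℝ} {lam : ℝ} {v : Fin m → ℝ}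
    (h : M.mulVec v = lam • v) (n : ℕ) : (M ^ n).mulVec v = lam ^ n • v := by
  induction n with
  | zero => simp [Matrix.one_mulVec]
  | succ n ih =>
    rw [pow_succ, ← Matrix.mulVec_mulVec, h, Matrix.mulVec_smul, ih, smul_smul, pow_succ, mul_comm]

lemma eigenvector_pos {M : Matrix (Fin m) (Fin m) ℝ} (hnn : ∀ i j, 0 ≤ M i j)
    (hirr : ∀ i j : Fin m, ∃ n : ℕ, 0 < (M ^ (n + 1)) i j) {lam : ℝ} (hpos : 0 < lam)
    {v : Fin m → ℝ} (hv0 : ∀ i, 0 ≤ v i) (hvne : v ≠ 0)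
    (heig : M.mulVec v = lam • v) : ∀ i, 0 < v i := by
  obtain ⟨j, hj⟩ : ∃ j, 0 < v j := by
    by_contra h
    push_neg at h
    exact hvne (funext fun i => le_antisymm (h i) (hv0 i))
  intro i
  obtain ⟨n, hn⟩ := hirr i j
  have h1 : (M ^ (n + 1)).mulVec v i = lam ^ (n + 1) * v i := by
    rw [pow_mulVec_eigen heig]; rfl
  have h2 : (M ^ (n + 1)) i j * v j ≤ (M ^ (n + 1)).mulVec v i := by
    apply Finset.single_le_sum (f := fun l => (M ^ (n + 1)) i l * v l)
      (fun l _ => mul_nonneg (pow_nonneg M hnn _ i l) (hv0 l)) (Finset.mem_univ j)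
  have h3 : 0 < (M ^ (n + 1)) i j * v j := mul_pos hn hj
  have h4 := h3.trans_le h2
  rw [h1] at h4
  have hl : (0:ℝ) < lam ^ (n+1) := by positivity
  nlinarith [hv0 i]
lemma subinvariant_eq (M : Matrix (Fin m) (Fin m) ℝ) (hnn : ∀ i j, 0 ≤ M i j)
    (hirr : ∀ i j : Fin m, ∃ n : ℕ, 0 < (M ^ (n + 1)) i j)
    {lam : ℝ} (hpos : 0 < lam)
    (hsr : spectralRadius ℂ (M.map (algebraMap ℝ ℂ)) ≤ ENNReal.ofReal lam)
    {x : Fin m → ℝ} (hx0 : ∀ i, 0 ≤ x i) (hxne : x ≠ 0)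
    (hsub : ∀ i, lam * x i ≤ M.mulVec x i) : M.mulVec x = lam • x := by
  by_contra hcon
  set y : Fin m → ℝ := fun i => M.mulVec x i - lam * x i with hy
  have hy0 : ∀ i, 0 ≤ y i := fun i => sub_nonneg.mpr (hsub i)
  obtain ⟨k, hk⟩ : ∃ k, 0 < y k := by
    by_contra h; push_neg at h
    apply hcon; funext i
    have h2 : y i = 0 := le_antisymm (h i) (hy0 i)
    have : M.mulVec x i - lam * x i = 0 := h2
    simpa [sub_eq_zero] using this
  obtain ⟨k', hk'⟩ : ∃ k', 0 < x k' := by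
    by_contra h; push_neg at h
    exact hxne (funext fun i => le_antisymm (h i) (hx0 i))
  choose a ha using fun j => hirr j k
  choose b hb using fun j => hirr j k'
  set B : Matrix (Fin m) (Fin m) ℝ := ∑ j : Fin m, (M ^ (a j + 1) + M ^ (b j + 1)) with hB
  have hB0 : ∀ i l, 0 ≤ B i l := by
    intro i l
    rw [hB, Matrix.sum_apply]
    exact Finset.sum_nonneg fun j _ => by
      have := pow_nonneg M hnn (a j + 1) i l
      have := pow_nonneg M hnn (b j + 1) i l
      simp only [Matrix.add_apply]; linarith
  have hBlow1 : ∀ i l, (M ^ (a i + 1)) i l ≤ B i l := by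
    intro i l
    rw [hB, Matrix.sum_apply]
    calc (M ^ (a i + 1)) i l ≤ (M ^ (a i + 1) + M ^ (b i + 1)) i l := by
          simp only [Matrix.add_apply]
          have := pow_nonneg M hnn (b i + 1) i l; linarith
      _ ≤ _ := Finset.single_le_sum (f := fun j => (M ^ (a j + 1) + M ^ (b j + 1)) i l)
          (fun j _ => by
            have := pow_nonneg M hnn (a j + 1) i l
            have := pow_nonneg M hnn (b j + 1) i l
            simp only [Matrix.add_apply]; linarith) (Finset.mem_univ i)
  have hBlow2 : ∀ i l, (M ^ (b i + 1)) i l ≤ B i l := by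
    intro i l
    rw [hB, Matrix.sum_apply]
    calc (M ^ (b i + 1)) i l ≤ (M ^ (a i + 1) + M ^ (b i + 1)) i l := by
          simp only [Matrix.add_apply]
          have := pow_nonneg M hnn (a i + 1) i l; linarith
      _ ≤ _ := Finset.single_le_sum (f := fun j => (M ^ (a j + 1) + M ^ (b j + 1)) i l)
          (fun j _ => by
            have := pow_nonneg M hnn (a j + 1) i l
            have := pow_nonneg M hnn (b j + 1) i l
            simp only [Matrix.add_apply]; linarith) (Finset.mem_univ i)
  have hcomm : M * B = B * M := by
    rw [hB, Finset.mul_sum, Finset.sum_mul]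
    refine Finset.sum_congr rfl fun j _ => ?_
    rw [mul_add, add_mul, ← pow_succ', ← pow_succ', ← pow_succ, ← pow_succ]
  set u : Fin m → ℝ := B.mulVec x with hu_def
  set w' : Fin m → ℝ := B.mulVec y with hw'_def
  have hu : ∀ i, 0 < u i := by
    intro i
    have h1 : B i k' * x k' ≤ u i := by
      apply Finset.single_le_sum (f := fun l => B i l * x l)
        (fun l _ => mul_nonneg (hB0 i l) (hx0 l)) (Finset.mem_univ k')
    exact lt_of_lt_of_le (mul_pos (lt_of_lt_of_le (hb i) (hBlow2 i k')) hk') h1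
  have hw' : ∀ i, 0 < w' i := by
    intro i
    have h1 : B i k * y k ≤ w' i := by
      apply Finset.single_le_sum (f := fun l => B i l * y l)
        (fun l _ => mul_nonneg (hB0 i l) (hy0 l)) (Finset.mem_univ k)
    exact lt_of_lt_of_le (mul_pos (lt_of_lt_of_le (ha i) (hBlow1 i k)) hk) h1
  have hMx : M.mulVec x = lam • x + y := by
    funext i; simp only [Pi.add_apply, Pi.smul_apply, smul_eq_mul, hy]; ring
  have hMu : M.mulVec u = lam • u + w' := by
    rw [hu_def, Matrix.mulVec_mulVec, hcomm, ← Matrix.mulVec_mulVec, hMx,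
      Matrix.mulVec_add, Matrix.mulVec_smul, hw'_def]
  have hnem : Nonempty (Fin m) := ⟨k⟩
  set ε : ℝ := Finset.univ.inf' Finset.univ_nonempty (fun i => w' i / u i) with hε_def
  have hε : 0 < ε := by
    rw [hε_def, Finset.lt_inf'_iff]
    exact fun i _ => div_pos (hw' i) (hu i)
  have hεle : ∀ i, ε * u i ≤ w' i := by
    intro i
    have h1 : ε ≤ w' i / u i := Finset.inf'_le _ (Finset.mem_univ i)
    exact (le_div_iff₀ (hu i)).mp h1
  have hgrow : ∀ i, (lam + ε) * u i ≤ M.mulVec u i := by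
    intro i
    have h1 := hεle i
    rw [hMu]
    simp only [Pi.add_apply, Pi.smul_apply, smul_eq_mul]
    nlinarith
  have hpow : ∀ n, ∀ i, (lam + ε) ^ n * u i ≤ (M ^ n).mulVec u i := by
    intro n
    induction n with
    | zero => intro i; simp [Matrix.one_mulVec]
    | succ n ih =>
      intro i
      have h1 := mulVec_mono hnn (p := fun j => (lam + ε) ^ n * u j)
        (q := (M ^ n).mulVec u) ih i
      have h2 : M.mulVec (fun j => (lam + ε) ^ n * u j) i
          = (lam + ε) ^ n * M.mulVec u i := by
        show M.mulVec ((lam + ε) ^ n • u) i = _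
        rw [Matrix.mulVec_smul]; rfl
      rw [h2] at h1
      have h3 : (lam + ε) ^ (n + 1) * u i ≤ (lam + ε) ^ n * M.mulVec u i := by
        have h4 := hgrow i
        calc (lam + ε) ^ (n + 1) * u i = (lam + ε) ^ n * ((lam + ε) * u i) := by ring
          _ ≤ (lam + ε) ^ n * M.mulVec u i :=
            mul_le_mul_of_nonneg_left h4 (by positivity)
      calc (lam + ε) ^ (n + 1) * u i ≤ M.mulVec ((M ^ n).mulVec u) i := le_trans h3 h1
        _ = (M ^ (n + 1)).mulVec u i := by rw [Matrix.mulVec_mulVec, ← pow_succ']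
  set U : ℝ := Finset.univ.sup' Finset.univ_nonempty u with hU_def
  have hUpos : 0 < U := lt_of_lt_of_le (hu k) (Finset.le_sup' u (Finset.mem_univ k))
  have hrow : ∀ n, (lam + ε) ^ n * u k ≤ (∑ j, (M ^ n) k j) * U := by
    intro n
    have h1 := hpow n k
    have h2 : (M ^ n).mulVec u k ≤ (∑ j, (M ^ n) k j) * U := by
      rw [Matrix.mulVec, dotProduct, Finset.sum_mul]
      exact Finset.sum_le_sum fun j _ => mul_le_mul_of_nonneg_left
        (Finset.le_sup' u (Finset.mem_univ j)) (pow_nonneg M hnn n k j)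
    linarith
  set A := M.map (algebraMap ℝ ℂ) with hA_def
  have hAn : ∀ n, A ^ n = (M ^ n).map (algebraMap ℝ ℂ) := by
    intro n
    rw [hA_def]
    have := map_pow ((algebraMap ℝ ℂ).mapMatrix) M n
    simp only [RingHom.mapMatrix_apply] at this
    exact this.symm
  have hnorm : ∀ n, (∑ j, (M ^ n) k j) ≤ ‖A ^ n‖ := by
    intro n
    have h1 : (∑ j, ‖(A ^ n) k j‖₊) ≤ ‖A ^ n‖₊ := by
      rw [Matrix.linfty_opNNNorm_def]
      exact Finset.le_sup (f := fun i => ∑ j, ‖(A ^ n) i j‖₊) (Finset.mem_univ k)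
    have h2 : ((∑ j, ‖(A ^ n) k j‖₊ : NNReal) : ℝ) ≤ ‖A ^ n‖ := h1
    refine le_trans (le_of_eq ?_) h2
    push_cast
    refine Finset.sum_congr rfl fun j _ => ?_
    rw [hAn, Matrix.map_apply]
    simp only [Complex.coe_algebraMap, Complex.norm_real]
    exact (Real.norm_of_nonneg (pow_nonneg M hnn n k j)).symm
  -- Gelfand
  have gel := spectrum.pow_nnnorm_pow_one_div_tendsto_nhds_spectralRadius A
  have hlt : spectralRadius ℂ A < ENNReal.ofReal (lam + ε / 2) := by
    refine lt_of_le_of_lt hsr ?_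
    rw [ENNReal.ofReal_lt_ofReal_iff (by positivity)]
    linarith
  have hev : ∀ᶠ n : ℕ in atTop, (‖A ^ n‖₊ : ENNReal) ^ (1 / (n : ℝ)) <
      ENNReal.ofReal (lam + ε / 2) := gel.eventually_lt_const hlt
  obtain ⟨N, hN⟩ := Filter.eventually_atTop.mp hev
  set r : ℝ := (lam + ε / 2) / (lam + ε) with hr_def
  have hr0 : 0 < r := by positivity
  have hr1 : r < 1 := by
    rw [hr_def, div_lt_one (by positivity)]; linarith
  set c : ℝ := u k / U with hc_def
  have hc : 0 < c := div_pos (hu k) hUpos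
  obtain ⟨n0, hn0⟩ := exists_pow_lt_of_lt_one hc hr1
  set n : ℕ := max (max N 1) n0 with hn_def
  have hnN : N ≤ n := le_trans (le_max_left _ _) (le_max_left _ _)
  have hn1 : 1 ≤ n := le_trans (le_max_right _ _) (le_max_left _ _)
  have hnn0 : n0 ≤ n := le_max_right _ _
  have h5 := hN n hnN
  -- convert to real inequality ‖A^n‖ < (lam+ε/2)^n
  have hnormlt : ‖A ^ n‖ < (lam + ε / 2) ^ n := by
    have he : ((‖A ^ n‖₊ : ENNReal)) = ENNReal.ofReal ‖A ^ n‖ :=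
      by rw [← enorm_eq_nnnorm, ofReal_norm]
    rw [he, ENNReal.ofReal_rpow_of_nonneg (norm_nonneg _)
      (by positivity : (0:ℝ) ≤ 1 / (n : ℝ))] at h5
    rw [ENNReal.ofReal_lt_ofReal_iff (by positivity)] at h5
    have hxe : ‖A ^ n‖ = (‖A ^ n‖ ^ (1 / (n : ℝ))) ^ (n : ℕ) := by
      rw [← Real.rpow_natCast (‖A ^ n‖ ^ (1 / (n : ℝ))) n, ← Real.rpow_mul (norm_nonneg _)]
      rw [one_div, inv_mul_cancel₀ (Nat.cast_ne_zero.mpr (by omega) : (n : ℝ) ≠ 0)]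
      exact (Real.rpow_one _).symm
    rw [hxe]
    exact pow_lt_pow_left₀ h5 (Real.rpow_nonneg (norm_nonneg _) _) (by omega)
  -- combine
  have hfin : c * (lam + ε) ^ n < (lam + ε / 2) ^ n := by
    have h6 := hrow n
    have h7 := hnorm n
    have h8 : (lam + ε) ^ n * u k < (lam + ε / 2) ^ n * U := by
      calc (lam + ε) ^ n * u k ≤ (∑ j, (M ^ n) k j) * U := h6
        _ ≤ ‖A ^ n‖ * U := mul_le_mul_of_nonneg_right h7 hUpos.le
        _ < (lam + ε / 2) ^ n * U := by
            exact mul_lt_mul_of_pos_right hnormlt hUpos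
    rw [hc_def, div_mul_eq_mul_div, div_lt_iff₀ hUpos]
    calc u k * (lam + ε) ^ n = (lam + ε) ^ n * u k := by ring
      _ < (lam + ε / 2) ^ n * U := h8
  have h9 : c < r ^ n := by
    rw [hr_def, div_pow, lt_div_iff₀ (by positivity)]
    calc c * (lam + ε) ^ n < (lam + ε / 2) ^ n := hfin
      _ = _ := rfl
  have h10 : r ^ n ≤ r ^ n0 := pow_le_pow_of_le_one hr0.le hr1.le hnn0
  linarith

lemma exists_nonneg_eigenvector (M : Matrix (Fin m) (Fin m) ℝ)
    (hnn : ∀ i j, 0 ≤ M i j) (hirr : ∀ i j : Fin m, ∃ n : ℕ, 0 < (M ^ (n + 1)) i j)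
    {lam : ℝ} (hpos : 0 < lam) (hroot : M.complexCharpoly.IsRoot (lam : ℂ))
    (hdom : ∀ μ : ℂ, M.complexCharpoly.IsRoot μ → ‖μ‖ ≤ lam) :
    ∃ v : Fin m → ℝ, (∀ i, 0 ≤ v i) ∧ v ≠ 0 ∧ M.mulVec v = lam • v := by
  set A := M.map (algebraMap ℝ ℂ) with hA_def
  obtain ⟨z, hz, heig⟩ := exists_complex_eigenvector A (lam : ℂ) hroot
  set x : Fin m → ℝ := fun i => ‖z i‖ with hx_def
  have hx0 : ∀ i, 0 ≤ x i := fun i => norm_nonneg _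
  have hxne : x ≠ 0 := by
    obtain ⟨k, hk⟩ := Function.ne_iff.mp hz
    intro h
    apply hk
    have := congrFun h k
    simpa [hx_def, norm_eq_zero] using this
  have hsub : ∀ i, lam * x i ≤ M.mulVec x i := by
    intro i
    have h1 : A.mulVec z i = (lam : ℂ) * z i := by
      rw [heig]; simp
    have h2 : lam * x i = ‖A.mulVec z i‖ := by
      rw [h1, norm_mul, Complex.norm_real, Real.norm_of_nonneg hpos.le]
    rw [h2]
    calc ‖A.mulVec z i‖ = ‖∑ j, A i j * z j‖ := by
          rw [Matrix.mulVec, dotProduct]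
      _ ≤ ∑ j, ‖A i j * z j‖ := norm_sum_le _ _
      _ = ∑ j, M i j * x j := by
          refine Finset.sum_congr rfl fun j _ => ?_
          rw [norm_mul, hA_def, Matrix.map_apply]
          simp only [Complex.coe_algebraMap, Complex.norm_real]
          rw [Real.norm_of_nonneg (hnn i j)]
      _ = M.mulVec x i := by rw [Matrix.mulVec, dotProduct]
  have hsr : spectralRadius ℂ A ≤ ENNReal.ofReal lam := spectralRadius_le A lam hdom
  exact ⟨x, hx0, hxne, subinvariant_eq M hnn hirr hpos hsr hx0 hxne hsub⟩

lemma charpoly_transpose {k : ℕ} (B : Matrix (Fin k) (Fin k) ℂ) :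
    Bᵀ.charpoly = B.charpoly := by
  rw [Matrix.charpoly, Matrix.charpoly]
  have h : charmatrix Bᵀ = (charmatrix B)ᵀ := by
    ext i j
    by_cases h : i = j
    · subst h; simp [charmatrix_apply, Matrix.transpose_apply]
    · simp [charmatrix_apply, Matrix.transpose_apply, Matrix.diagonal_apply_ne _ h,
        Matrix.diagonal_apply_ne' _ h]
  rw [h, Matrix.det_transpose]

lemma complexCharpoly_transpose (M : Matrix (Fin m) (Fin m) ℝ) :
    Mᵀ.complexCharpoly = M.complexCharpoly := by
  rw [Matrix.complexCharpoly, Matrix.complexCharpoly, Matrix.transpose_map]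
  exact charpoly_transpose _

end PFAux

/-- Perron–Frobenius theorem: an irreducible nonnegative real square matrix has nonnegative
right and left eigenvectors for the Perron–Frobenius eigenvalue, normalized so that
`wᵀv = 1`. -/
theorem perron_frobenius_eigenvectors {m : ℕ} (M : Matrix (Fin m) (Fin m) ℝ)
    (hnn : ∀ i j, 0 ≤ M i j) (hirr : M.IsIrreducible')
    (lam : ℝ) (hpos : 0 < lam) (hroot : M.complexCharpoly.IsRoot (lam : ℂ))
    (hdom : ∀ μ : ℂ, M.complexCharpoly.IsRoot μ → ‖μ‖ ≤ lam) :
    ∃ v w : Fin m → ℝ, (∀ i, 0 ≤ v i) ∧ (∀ i, 0 ≤ w i) ∧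
      M.mulVec v = lam • v ∧ Matrix.vecMul w M = lam • w ∧
      dotProduct w v = 1 := by
  obtain ⟨v, hv0, hvne, hveig⟩ := PFAux.exists_nonneg_eigenvector M hnn hirr hpos hroot hdom
  have hirrT : ∀ i j : Fin m, ∃ n : ℕ, 0 < (Mᵀ ^ (n + 1)) i j := by
    intro i j
    obtain ⟨n, hn⟩ := hirr j i
    exact ⟨n, by rwa [← Matrix.transpose_pow, Matrix.transpose_apply]⟩
  have hchT : Mᵀ.complexCharpoly = M.complexCharpoly := PFAux.complexCharpoly_transpose M
  obtain ⟨w, hw0, hwne, hweig⟩ := PFAux.exists_nonneg_eigenvector Mᵀ (fun i j => hnn j i)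
    hirrT hpos (by rw [hchT]; exact hroot) (fun μ h => hdom μ (by rwa [hchT] at h))
  have hvpos := PFAux.eigenvector_pos hnn hirr hpos hv0 hvne hveig
  obtain ⟨k, hk⟩ : ∃ k, 0 < w k := by
    by_contra h; push_neg at h
    exact hwne (funext fun i => le_antisymm (h i) (hw0 i))
  set c : ℝ := dotProduct w v with hc_def
  have hc : 0 < c := by
    have h1 : w k * v k ≤ c := by
      apply Finset.single_le_sum (f := fun i => w i * v i)
        (fun i _ => mul_nonneg (hw0 i) (hvpos i).le) (Finset.mem_univ k)
    exact lt_of_lt_of_le (mul_pos hk (hvpos k)) h1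
  refine ⟨c⁻¹ • v, w, ?_, hw0, ?_, ?_, ?_⟩
  · intro i
    exact mul_nonneg (inv_nonneg.mpr hc.le) (hv0 i)
  · rw [Matrix.mulVec_smul, hveig, smul_comm]
  · rw [← Matrix.mulVec_transpose, hweig]
  · rw [dotProduct_smul, ← hc_def, smul_eq_mul, inv_mul_cancel₀ hc.ne']
end
end

section
/- Every nonnegative real square matrix M has an eigenvalue λ ∈ ℝ with λ ≥ 0 such that λ ≥ |μ| for every complex eigenvalue μ of M. -/
def Matrix.IsIrreducibleReal {m : ℕ} (M : Matrix (Fin m) (Fin m) ℝ) : Prop :=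
  ∀ i j : Fin m, ∃ n : ℕ, 0 < (M ^ (n + 1)) i j

open Matrix Polynomial Finset Filter


lemma perron_positive {m : ℕ} (hm : 0 < m) (Q : Matrix (Fin m) (Fin m) ℝ)
    (hQ : ∀ i j, 0 < Q i j) :
    ∃ r : ℝ, 0 < r ∧ ∃ w : Fin m → ℝ, (∀ i, 0 < w i) ∧ Q *ᵥ w = r • w := by
  have hne : Nonempty (Fin m) := ⟨⟨0, hm⟩⟩
  have i₀ : Fin m := ⟨0, hm⟩
  obtain ⟨q, hqdef⟩ : ∃ q : ℝ, q = Finset.univ.inf' univ_nonempty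
      (fun p : Fin m × Fin m => Q p.1 p.2) := ⟨_, rfl⟩
  have hqle : ∀ i j, q ≤ Q i j := fun i j =>
    hqdef ▸ Finset.inf'_le _ (Finset.mem_univ (i, j))
  have hq : 0 < q := by
    obtain ⟨p, -, hp⟩ := Finset.exists_mem_eq_inf' (univ_nonempty)
      (fun p : Fin m × Fin m => Q p.1 p.2)
    rw [hqdef, hp]; exact hQ _ _
  obtain ⟨B, hBdef⟩ : ∃ B : ℝ, B = ∑ i, ∑ j, Q i j := ⟨_, rfl⟩
  have hrow : ∀ i, ∑ j, Q i j ≤ B := by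
    intro i
    rw [hBdef]
    exact Finset.single_le_sum (f := fun i => ∑ j, Q i j)
      (fun i _ => Finset.sum_nonneg fun j _ => (hQ i j).le) (Finset.mem_univ i)
  have hqB : q ≤ B := le_trans (hqle i₀ i₀) (le_trans
    (Finset.single_le_sum (fun j _ => (hQ i₀ j).le) (Finset.mem_univ i₀)) (hrow i₀))
  have hB : 0 < B := lt_of_lt_of_le hq hqB
  have hmR : (0 : ℝ) < m := Nat.cast_pos.mpr hm
  have hm1 : (1 : ℝ) ≤ m := by exact_mod_cast hm
  obtain ⟨C, hCdef⟩ : ∃ C : ℝ, C = m * B := ⟨_, rfl⟩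
  have hBC : B ≤ C := by rw [hCdef]; nlinarith
  -- the compact set T
  obtain ⟨T, hTdef⟩ : ∃ T : Set (ℝ × (Fin m → ℝ)), T = {p | p.1 ∈ Set.Icc 0 C ∧
      (∀ i, 0 ≤ p.2 i) ∧ (∑ i, p.2 i) = 1 ∧ ∀ i, p.1 * p.2 i ≤ (Q *ᵥ p.2) i} := ⟨_, rfl⟩
  have hc2 : ∀ i : Fin m, Continuous (fun p : ℝ × (Fin m → ℝ) => p.2 i) := fun i =>
    (continuous_apply i).comp continuous_snd
  have hmv : ∀ i : Fin m, Continuous (fun p : ℝ × (Fin m → ℝ) => (Q *ᵥ p.2) i) := by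
    intro i
    simp only [mulVec, dotProduct]
    exact continuous_finset_sum _ fun j _ => continuous_const.mul (hc2 j)
  have hTclosed : IsClosed T := by
    rw [hTdef]
    apply IsClosed.inter (isClosed_Icc.preimage continuous_fst)
    apply IsClosed.inter
    · show IsClosed {p : ℝ × (Fin m → ℝ) | ∀ i, 0 ≤ p.2 i}
      rw [Set.setOf_forall]
      exact isClosed_iInter fun i => isClosed_le continuous_const (hc2 i)
    apply IsClosed.inter
    · exact isClosed_eq (continuous_finset_sum _ fun i _ => hc2 i) continuous_const
    · show IsClosed {p : ℝ × (Fin m → ℝ) | ∀ i, p.1 * p.2 i ≤ (Q *ᵥ p.2) i}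
      rw [Set.setOf_forall]
      exact isClosed_iInter fun i => isClosed_le (continuous_fst.mul (hc2 i)) (hmv i)
  have hTsub : T ⊆ Set.Icc ((0 : ℝ), (fun _ => 0 : Fin m → ℝ)) (C, fun _ => 1) := by
    rw [hTdef]
    rintro ⟨t, x⟩ ⟨ht, hx, hsum, -⟩
    refine ⟨⟨ht.1, fun i => hx i⟩, ⟨ht.2, fun i => ?_⟩⟩
    calc x i ≤ ∑ j, x j := Finset.single_le_sum (fun j _ => hx j) (Finset.mem_univ i)
    _ = 1 := hsum
  have hTcompact : IsCompact T := IsCompact.of_isClosed_subset isCompact_Icc hTclosed hTsub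
  have hsumunif : ∑ _i : Fin m, (m : ℝ)⁻¹ = 1 := by
    simp [Finset.sum_const, Finset.card_univ, nsmul_eq_mul, mul_inv_cancel₀ hmR.ne']
  have hunif : ((q, fun _ => (m : ℝ)⁻¹) : ℝ × (Fin m → ℝ)) ∈ T := by
    rw [hTdef]
    refine ⟨⟨hq.le, le_trans hqB hBC⟩, fun i => by positivity, hsumunif, fun i => ?_⟩
    have h1 : q ≤ ∑ j, Q i j := le_trans (hqle i i)
      (Finset.single_le_sum (fun j _ => (hQ i j).le) (Finset.mem_univ i))
    have h2 : (Q *ᵥ fun _ => (m : ℝ)⁻¹) i = (∑ j, Q i j) * (m : ℝ)⁻¹ := by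
      simp [mulVec, dotProduct, Finset.sum_mul]
    rw [h2]
    have h3 : (0:ℝ) ≤ (m : ℝ)⁻¹ := by positivity
    nlinarith
  -- maximize
  obtain ⟨p₀, hp₀T, hmax⟩ := hTcompact.exists_isMaxOn ⟨_, hunif⟩ continuous_fst.continuousOn
  obtain ⟨r, x₀⟩ := p₀
  have hp₀T' := hTdef ▸ hp₀T
  obtain ⟨hrC, hx₀nn, hx₀sum, hineq⟩ := hp₀T'
  simp only at hrC hx₀nn hx₀sum hineq
  have hqr : q ≤ r := hmax hunif
  have hr : 0 < r := lt_of_lt_of_le hq hqr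
  obtain ⟨z, hzdef⟩ : ∃ z : Fin m → ℝ, z = Q *ᵥ x₀ := ⟨_, rfl⟩
  have hineq' : ∀ i, r * x₀ i ≤ z i := by intro i; rw [hzdef]; exact hineq i
  have hzlb : ∀ i, q ≤ z i := by
    intro i
    have h1 : ∑ j, q * x₀ j ≤ ∑ j, Q i j * x₀ j :=
      Finset.sum_le_sum fun j _ => mul_le_mul_of_nonneg_right (hqle i j) (hx₀nn j)
    rw [hzdef]
    simpa [mulVec, dotProduct, ← Finset.mul_sum, hx₀sum] using h1
  have hx₀le1 : ∀ j, x₀ j ≤ 1 := by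
    intro j
    calc x₀ j ≤ ∑ i, x₀ i := Finset.single_le_sum (fun i _ => hx₀nn i) (Finset.mem_univ j)
    _ = 1 := hx₀sum
  have hzub : ∀ i, z i ≤ B := by
    intro i
    have h1 : ∑ j, Q i j * x₀ j ≤ ∑ j, Q i j * 1 :=
      Finset.sum_le_sum fun j _ => mul_le_mul_of_nonneg_left (hx₀le1 j) (hQ i j).le
    simp only [mul_one] at h1
    rw [hzdef]
    exact le_trans (by simpa [mulVec, dotProduct] using h1) (hrow i)
  -- key claim
  have hkey : Q *ᵥ x₀ = r • x₀ := by
    by_contra hne'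
    have hy : ∀ i, 0 ≤ z i - r * x₀ i := fun i => sub_nonneg.mpr (hineq' i)
    have hex : ∃ j₀, 0 < z j₀ - r * x₀ j₀ := by
      by_contra hall
      push_neg at hall
      apply hne'
      funext i
      have h1 : z i - r * x₀ i = 0 := le_antisymm (hall i) (hy i)
      have h2 : z i = r * x₀ i := by linarith
      rw [hzdef] at h2
      simpa [Pi.smul_apply, smul_eq_mul] using h2
    obtain ⟨j₀, hj₀⟩ := hex
    obtain ⟨y, hydef⟩ : ∃ y : Fin m → ℝ, y = fun i => z i - r * x₀ i := ⟨_, rfl⟩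
    have hy' : ∀ i, 0 ≤ y i := by intro i; rw [hydef]; exact hy i
    obtain ⟨δ, hδdef⟩ : ∃ δ : ℝ, δ = q * y j₀ := ⟨_, rfl⟩
    have hδ : 0 < δ := by rw [hδdef, hydef]; exact mul_pos hq hj₀
    have hQy : ∀ i, δ ≤ (Q *ᵥ y) i := by
      intro i
      have h1 : Q i j₀ * y j₀ ≤ ∑ j, Q i j * y j :=
        Finset.single_le_sum (f := fun j => Q i j * y j)
          (fun j _ => mul_nonneg (hQ i j).le (hy' j)) (Finset.mem_univ j₀)
      have h2 : δ ≤ Q i j₀ * y j₀ := by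
        rw [hδdef]
        exact mul_le_mul_of_nonneg_right (hqle i j₀) (hy' j₀)
      simpa [mulVec, dotProduct] using le_trans h2 h1
    have hQz : ∀ i, (Q *ᵥ z) i = (Q *ᵥ y) i + r * z i := by
      intro i
      have h1 : z = y + r • x₀ := by
        funext i; rw [hydef]; simp [Pi.smul_apply, smul_eq_mul]
      calc (Q *ᵥ z) i = (Q *ᵥ (y + r • x₀)) i := by rw [← h1]
      _ = (Q *ᵥ y) i + r * (Q *ᵥ x₀) i := by
          rw [mulVec_add, mulVec_smul]; simp [Pi.smul_apply, smul_eq_mul]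
      _ = (Q *ᵥ y) i + r * z i := by rw [← hzdef]
    obtain ⟨t', ht'def⟩ : ∃ t' : ℝ, t' = r + δ / B := ⟨_, rfl⟩
    have hδB : 0 < δ / B := div_pos hδ hB
    have ht'r : r < t' := by rw [ht'def]; linarith
    have ht'z : ∀ i, t' * z i ≤ (Q *ᵥ z) i := by
      intro i
      have h1 : δ / B * z i ≤ δ := by
        rw [div_mul_eq_mul_div, div_le_iff₀ hB]
        exact mul_le_mul_of_nonneg_left (hzub i) hδ.le
      calc t' * z i = r * z i + δ / B * z i := by rw [ht'def]; ring
      _ ≤ r * z i + δ := by linarith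
      _ ≤ r * z i + (Q *ᵥ y) i := by linarith [hQy i]
      _ = (Q *ᵥ z) i := by linarith [hQz i]
    obtain ⟨S, hSdef⟩ : ∃ S : ℝ, S = ∑ i, z i := ⟨_, rfl⟩
    have hS : 0 < S := by
      rw [hSdef]
      exact Finset.sum_pos (fun i _ => lt_of_lt_of_le hq (hzlb i)) univ_nonempty
    obtain ⟨x₁, hx₁def⟩ : ∃ x₁ : Fin m → ℝ, x₁ = fun i => S⁻¹ * z i := ⟨_, rfl⟩
    have hx₁nn : ∀ i, 0 ≤ x₁ i := by
      intro i; rw [hx₁def]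
      exact mul_nonneg (inv_nonneg.mpr hS.le) (le_trans hq.le (hzlb i))
    have hx₁sum : ∑ i, x₁ i = 1 := by
      rw [hx₁def]
      simp only
      rw [← Finset.mul_sum, ← hSdef, inv_mul_cancel₀ hS.ne']
    have hQx₁ : ∀ i, (Q *ᵥ x₁) i = S⁻¹ * (Q *ᵥ z) i := by
      intro i
      rw [hx₁def]
      simp only [mulVec, dotProduct, Finset.mul_sum]
      exact Finset.sum_congr rfl fun j _ => by ring
    have hx₁ineq : ∀ i, t' * x₁ i ≤ (Q *ᵥ x₁) i := by
      intro i
      rw [hQx₁ i, hx₁def]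
      have hS' : (0:ℝ) ≤ S⁻¹ := inv_nonneg.mpr hS.le
      calc t' * (S⁻¹ * z i) = S⁻¹ * (t' * z i) := by ring
      _ ≤ S⁻¹ * (Q *ᵥ z) i := mul_le_mul_of_nonneg_left (ht'z i) hS'
    have ht'nn : 0 ≤ t' := le_trans hr.le ht'r.le
    have hx₁le1 : ∀ j, x₁ j ≤ 1 := by
      intro j
      calc x₁ j ≤ ∑ i, x₁ i := Finset.single_le_sum (fun i _ => hx₁nn i) (Finset.mem_univ j)
      _ = 1 := hx₁sum
    have ht'C : t' ≤ C := by
      obtain ⟨i, -, hi⟩ := Finset.exists_le_of_sum_le (univ_nonempty)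
        (f := fun _ : Fin m => (m : ℝ)⁻¹) (g := x₁) (by rw [hsumunif, hx₁sum])
      have h1 : t' * (m : ℝ)⁻¹ ≤ t' * x₁ i := mul_le_mul_of_nonneg_left hi ht'nn
      have h2 : (Q *ᵥ x₁) i ≤ B := by
        have h3 : ∑ j, Q i j * x₁ j ≤ ∑ j, Q i j * 1 :=
          Finset.sum_le_sum fun j _ => mul_le_mul_of_nonneg_left (hx₁le1 j) (hQ i j).le
        simp only [mul_one] at h3
        exact le_trans (by simpa [mulVec, dotProduct] using h3) (hrow i)
      have h3 : t' * (m : ℝ)⁻¹ ≤ B := le_trans h1 (le_trans (hx₁ineq i) h2)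
      rw [hCdef]
      calc t' = t' * (m : ℝ)⁻¹ * m := by field_simp
      _ ≤ B * m := mul_le_mul_of_nonneg_right h3 hmR.le
      _ = m * B := by ring
    have hle : t' ≤ r := hmax (a := (t', x₁))
      (by rw [hTdef]; exact ⟨⟨ht'nn, ht'C⟩, hx₁nn, hx₁sum, hx₁ineq⟩)
    linarith
  have hx₀pos : ∀ i, 0 < x₀ i := by
    intro i
    have h1 : z i = r * x₀ i := by
      rw [hzdef, hkey]; simp [Pi.smul_apply, smul_eq_mul]
    have h2 := hzlb i
    nlinarith
  exact ⟨r, hr, x₀, hx₀pos, hkey⟩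

lemma charpoly_eval_eq {m : ℕ} {K : Type*} [Field K] (A : Matrix (Fin m) (Fin m) K) (t : K) :
    A.charpoly.eval t = (t • (1 : Matrix (Fin m) (Fin m) K) - A).det := by
  rw [Matrix.charpoly, _root_.eval_det, matPolyEquiv_charmatrix]
  congr 1
  simp [Matrix.scalar, smul_one_eq_diagonal]

lemma eig_of_root {m : ℕ} (A : Matrix (Fin m) (Fin m) ℂ) {μ : ℂ}
    (h : A.charpoly.IsRoot μ) : ∃ u : Fin m → ℂ, u ≠ 0 ∧ A *ᵥ u = μ • u := by
  have hdet : (μ • (1 : Matrix (Fin m) (Fin m) ℂ) - A).det = 0 := by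
    rw [← charpoly_eval_eq]; exact h
  obtain ⟨u, hu0, hu⟩ := (Matrix.exists_mulVec_eq_zero_iff).mpr hdet
  refine ⟨u, hu0, ?_⟩
  have := hu
  rw [sub_mulVec, smul_mulVec, one_mulVec, sub_eq_zero] at this
  exact this.symm

lemma eig_real_of_eigpair {m : ℕ} (A : Matrix (Fin m) (Fin m) ℝ) {t : ℝ} {v : Fin m → ℝ}
    (hv : v ≠ 0) (h : A *ᵥ v = t • v) :
    (t • (1 : Matrix (Fin m) (Fin m) ℝ) - A).det = 0 := by
  rw [← Matrix.exists_mulVec_eq_zero_iff]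
  exact ⟨v, hv, by rw [sub_mulVec, smul_mulVec, one_mulVec, h, sub_self]⟩

lemma dominate {m : ℕ} (M Q : Matrix (Fin m) (Fin m) ℝ)
    (hnn : ∀ i j, 0 ≤ M i j) (hMQ : ∀ i j, M i j ≤ Q i j)
    {s : ℝ} {w : Fin m → ℝ} (hw : ∀ i, 0 < w i) (hws : Qᵀ *ᵥ w = s • w)
    {μ : ℂ} (hμ : (M.map (algebraMap ℝ ℂ)).charpoly.IsRoot μ) : ‖μ‖ ≤ s := by
  obtain ⟨u, hu0, hu⟩ := eig_of_root _ hμ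
  obtain ⟨a, hadef⟩ : ∃ a : Fin m → ℝ, a = fun i => ‖u i‖ := ⟨_, rfl⟩
  have ha : ∀ i, 0 ≤ a i := fun i => by rw [hadef]; exact norm_nonneg _
  have key : ∀ i, ‖μ‖ * a i ≤ ∑ j, Q i j * a j := by
    intro i
    have h2 : μ * u i = ∑ j, (M i j : ℂ) * u j := by
      have := congrFun hu i
      simp only [mulVec, dotProduct, Pi.smul_apply, smul_eq_mul, Matrix.map_apply] at this
      rw [← this]
      rfl
    calc ‖μ‖ * a i = ‖μ * u i‖ := by rw [hadef]; exact (norm_mul μ (u i)).symm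
    _ = ‖∑ j, (M i j : ℂ) * u j‖ := by rw [h2]
    _ ≤ ∑ j, ‖(M i j : ℂ) * u j‖ := norm_sum_le _ _
    _ = ∑ j, M i j * a j := by
        refine Finset.sum_congr rfl fun j _ => ?_
        rw [norm_mul, Complex.norm_real, Real.norm_eq_abs, abs_of_nonneg (hnn i j), hadef]
    _ ≤ ∑ j, Q i j * a j :=
        Finset.sum_le_sum fun j _ => mul_le_mul_of_nonneg_right (hMQ i j) (ha j)
  have hwa : 0 < ∑ i, w i * a i := by
    obtain ⟨i, hi⟩ := Function.ne_iff.mp hu0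
    refine Finset.sum_pos' (fun i _ => mul_nonneg (hw i).le (ha i)) ⟨i, Finset.mem_univ i, ?_⟩
    have : 0 < a i := by
      rw [hadef]
      exact norm_pos_iff.mpr (by simpa using hi)
    exact mul_pos (hw i) this
  have main : ‖μ‖ * ∑ i, w i * a i ≤ s * ∑ i, w i * a i := by
    have h1 : ‖μ‖ * ∑ i, w i * a i ≤ ∑ i, w i * ((Q *ᵥ a) i) := by
      rw [Finset.mul_sum]
      refine Finset.sum_le_sum fun i _ => ?_
      have := mul_le_mul_of_nonneg_left (key i) (hw i).le
      calc ‖μ‖ * (w i * a i) = w i * (‖μ‖ * a i) := by ring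
      _ ≤ w i * ∑ j, Q i j * a j := this
      _ = w i * (Q *ᵥ a) i := by rw [mulVec, dotProduct]
    have h2 : ∑ i, w i * ((Q *ᵥ a) i) = s * ∑ i, w i * a i := by
      have : w ⬝ᵥ (Q *ᵥ a) = (Qᵀ *ᵥ w) ⬝ᵥ a := by
        rw [Matrix.dotProduct_mulVec, Matrix.mulVec_transpose]
      rw [show ∑ i, w i * ((Q *ᵥ a) i) = w ⬝ᵥ (Q *ᵥ a) from rfl, this, hws,
        smul_dotProduct]
      simp [dotProduct, smul_eq_mul, Finset.mul_sum]
    linarith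
  exact le_of_mul_le_mul_right main hwa


/-- Every nonnegative real square matrix has a nonnegative real eigenvalue dominating all
complex eigenvalues in absolute value. -/
theorem perron_frobenius_general {m : ℕ} (hm : 0 < m) (M : Matrix (Fin m) (Fin m) ℝ)
    (hnn : ∀ i j, 0 ≤ M i j) :
    ∃ lam : ℝ, 0 ≤ lam ∧ M.complexCharpoly.IsRoot (lam : ℂ) ∧
      ∀ μ : ℂ, M.complexCharpoly.IsRoot μ → ‖μ‖ ≤ lam := by
  have hne : Nonempty (Fin m) := ⟨⟨0, hm⟩⟩
  have i₀ : Fin m := ⟨0, hm⟩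
  -- perturbation
  obtain ⟨ε, hεdef⟩ : ∃ ε : ℕ → ℝ, ε = fun n : ℕ => ((n : ℝ) + 1)⁻¹ := ⟨_, rfl⟩
  have hεpos : ∀ n, 0 < ε n := by intro n; rw [hεdef]; positivity
  have hεle1 : ∀ n, ε n ≤ 1 := by
    intro n; rw [hεdef]
    simp only
    rw [inv_le_one_iff₀]
    right; linarith [Nat.cast_nonneg (α := ℝ) n]
  obtain ⟨Qn, hQndef⟩ : ∃ Qn : ℕ → Matrix (Fin m) (Fin m) ℝ,
      Qn = fun n => M + (ε n) • (Matrix.of fun _ _ => (1:ℝ)) := ⟨_, rfl⟩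
  have hQnapp : ∀ n i j, Qn n i j = M i j + ε n := by
    intro n i j; rw [hQndef]; simp
  have hQnpos : ∀ n i j, 0 < Qn n i j := by
    intro n i j; rw [hQnapp]; linarith [hnn i j, hεpos n]
  have hMQn : ∀ n i j, M i j ≤ Qn n i j := by
    intro n i j; rw [hQnapp]; linarith [hεpos n]
  -- Perron data for each transposed perturbed matrix
  have H : ∀ n : ℕ, ∃ s : ℝ, 0 < s ∧ ∃ w : Fin m → ℝ, (∀ i, 0 < w i) ∧
      (Qn n)ᵀ *ᵥ w = s • w := by
    intro n
    exact perron_positive hm (Qn n)ᵀ (fun i j => hQnpos n j i)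
  choose s hs w hw heig using H
  -- uniform bound on s n
  obtain ⟨B, hBdef⟩ : ∃ B : ℝ, B = (∑ i, ∑ j, M i j) + m := ⟨_, rfl⟩
  have hsB : ∀ n, s n ≤ B := by
    intro n
    obtain ⟨i, -, hi⟩ := Finset.exists_max_image Finset.univ (w n) ⟨i₀, Finset.mem_univ i₀⟩
    have h1 : s n * w n i = ∑ j, Qn n j i * w n j := by
      have := congrFun (heig n) i
      simp only [mulVec, dotProduct, Pi.smul_apply, smul_eq_mul, transpose_apply] at this
      rw [← this]
    have h2 : ∑ j, Qn n j i * w n j ≤ (∑ j, Qn n j i) * w n i := by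
      rw [Finset.sum_mul]
      exact Finset.sum_le_sum fun j _ =>
        mul_le_mul_of_nonneg_left (hi j (Finset.mem_univ j)) (hQnpos n j i).le
    have h3 : ∑ j, Qn n j i ≤ B := by
      rw [hBdef]
      have e1 : ∑ j, Qn n j i = (∑ j, M j i) + m * ε n := by
        simp only [hQnapp, Finset.sum_add_distrib, Finset.sum_const, Finset.card_univ,
          nsmul_eq_mul, Fintype.card_fin]
      rw [e1]
      have e2 : ∑ j, M j i ≤ ∑ i', ∑ j, M i' j :=
        Finset.sum_le_sum fun j _ => Finset.single_le_sum (f := fun k => M j k)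
          (fun k _ => hnn j k) (Finset.mem_univ i)
      have e3 : (m : ℝ) * ε n ≤ m := by
        have := hεle1 n
        have hm0 : (0:ℝ) ≤ m := Nat.cast_nonneg m
        nlinarith [hεpos n]
      linarith
    have h4 : s n * w n i ≤ B * w n i :=
      h1 ▸ le_trans h2 (mul_le_mul_of_nonneg_right h3 (hw n i).le)
    exact le_of_mul_le_mul_right h4 (hw n i)
  -- extract convergent subsequence
  obtain ⟨lam, hlamIcc, φ, hφ, hconv⟩ := (isCompact_Icc (a := (0:ℝ)) (b := B)).tendsto_subseq
    (x := s) (fun n => ⟨(hs n).le, hsB n⟩)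
  -- lam is an eigenvalue of M
  have hdet : ∀ n, ((s n) • (1 : Matrix (Fin m) (Fin m) ℝ) - Qn n).det = 0 := by
    intro n
    have h1 := eig_real_of_eigpair (Qn n)ᵀ
      (v := w n) (fun h => (hw n i₀).ne' (congrFun h i₀)) (heig n)
    have h2 : ((s n) • (1 : Matrix (Fin m) (Fin m) ℝ) - (Qn n)ᵀ)
        = ((s n) • (1 : Matrix (Fin m) (Fin m) ℝ) - Qn n)ᵀ := by
      rw [transpose_sub, transpose_smul, transpose_one]
    rw [h2, det_transpose] at h1
    exact h1
  have hF : Continuous (fun p : ℝ × ℝ =>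
      (p.1 • (1 : Matrix (Fin m) (Fin m) ℝ) - (M + p.2 • (Matrix.of fun _ _ => (1:ℝ)))).det) := by
    apply Continuous.matrix_det
    apply continuous_matrix
    intro i j
    simp only [Matrix.sub_apply, Matrix.smul_apply, Matrix.add_apply, Matrix.of_apply, smul_eq_mul]
    fun_prop
  have hεconv : Tendsto (fun k => ε (φ k)) atTop (nhds 0) := by
    rw [hεdef]
    exact (tendsto_one_div_add_atTop_nhds_zero_nat.comp hφ.tendsto_atTop).congr
      (fun k => by simp [one_div])
  have hpair : Tendsto (fun k => ((s (φ k)), ε (φ k))) atTop (nhds (lam, 0)) :=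
    hconv.prodMk_nhds hεconv
  have hdetlam : ((lam • (1 : Matrix (Fin m) (Fin m) ℝ)) - M).det = 0 := by
    have h1 : Tendsto (fun k => (((s (φ k)) • (1 : Matrix (Fin m) (Fin m) ℝ) -
        (M + (ε (φ k)) • (Matrix.of fun _ _ => (1:ℝ)))).det)) atTop
        (nhds ((lam • (1 : Matrix (Fin m) (Fin m) ℝ) -
        (M + (0:ℝ) • (Matrix.of fun _ _ => (1:ℝ)))).det)) := (hF.tendsto _).comp hpair
    have h2 : (fun k => (((s (φ k)) • (1 : Matrix (Fin m) (Fin m) ℝ) -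
        (M + (ε (φ k)) • (Matrix.of fun _ _ => (1:ℝ)))).det)) = fun _ => (0:ℝ) := by
      funext k
      have h := hdet (φ k)
      rw [hQndef] at h
      simpa using h
    rw [h2] at h1
    have h3 := tendsto_nhds_unique h1 tendsto_const_nhds
    rw [zero_smul, add_zero] at h3
    exact h3
  have hroot : M.charpoly.IsRoot lam := by
    rw [Polynomial.IsRoot, charpoly_eval_eq]
    exact hdetlam
  have hrootC : M.complexCharpoly.IsRoot (lam : ℂ) := by
    rw [Matrix.complexCharpoly, Matrix.charpoly_map, Polynomial.IsRoot,
      show ((lam : ℂ)) = algebraMap ℝ ℂ lam from rfl, Polynomial.eval_map,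
      Polynomial.eval₂_at_apply, hroot]
    simp
  refine ⟨lam, hlamIcc.1, hrootC, fun μ hμ => ?_⟩
  have hbd : ∀ k, ‖μ‖ ≤ s (φ k) := fun k =>
    dominate M (Qn (φ k)) hnn (hMQn (φ k)) (hw (φ k)) (heig (φ k)) hμ
  exact ge_of_tendsto hconv (Eventually.of_forall hbd)
end

section
/- Let R be a finite based ℝ_{≥0}-algebra with basis C = {1 = c_0, …, c_{r−1}}, let c ∈ ℝ_{≥0}C, and let M(c) be the action matrix of c restricted to the connected component of 1. If M(c) is irreducible with Perron–Frobenius eigenvalue λ, then lim_{n→∞} (b_n^{R,c})^{1/n} = λ, where b_n^{R,c} is the sum of all coefficients of c^n in the basis C. -/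
def Matrix.IsIrreduciblePow {m : ℕ} (M : Matrix (Fin m) (Fin m) ℝ) : Prop :=
  ∀ i j : Fin m, ∃ n : ℕ, 0 < (M ^ (n + 1)) i j

open Filter Matrix Polynomial Finset

attribute [local instance] Matrix.linftyOpNormedRing Matrix.linftyOpNormedAlgebra

section PfAux

lemma pfaux_tendsto_rpow_inv (C : ℝ) (hC : 0 < C) :
    Tendsto (fun n : ℕ => C ^ ((n : ℝ)⁻¹)) atTop (nhds 1) := by
  have h : ∀ n : ℕ, C ^ ((n : ℝ)⁻¹) = Real.exp ((n : ℝ)⁻¹ * Real.log C) := fun n => by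
    rw [Real.rpow_def_of_pos hC, mul_comm]
  simp_rw [h]
  have h2 : Tendsto (fun n : ℕ => (n : ℝ)⁻¹ * Real.log C) atTop (nhds 0) := by
    have h3 : Tendsto (fun n : ℕ => (n : ℝ)⁻¹) atTop (nhds 0) := by
      simpa [one_div] using tendsto_one_div_atTop_nhds_zero_nat (𝕜 := ℝ)
    simpa using h3.mul_const (Real.log C)
  have := (Real.continuous_exp.tendsto 0).comp h2
  simpa [Function.comp_def] using this

lemma pfaux_charpoly_eval {n : Type*} [Fintype n] [DecidableEq n] {K : Type*} [CommRing K]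
    (M : Matrix n n K) (t : K) :
    M.charpoly.eval t = (t • (1 : Matrix n n K) - M).det := by
  rw [Matrix.charpoly, eval_det, matPolyEquiv_charmatrix]
  congr 1
  ext i j
  by_cases h : i = j <;> simp [h, Matrix.one_apply, Matrix.diagonal]

lemma pfaux_spectrum_isRoot {n : Type*} [Fintype n] [DecidableEq n] {K : Type*} [Field K]
    (N : Matrix n n K) {μ : K} (h : μ ∈ spectrum K N) : N.charpoly.IsRoot μ := by
  rw [spectrum.mem_iff] at h
  rw [Polynomial.IsRoot, pfaux_charpoly_eval]
  by_contra hd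
  apply h
  have heq : algebraMap K (Matrix n n K) μ - N = μ • (1 : Matrix n n K) - N := by
    rw [Algebra.algebraMap_eq_smul_one]
  rw [heq]
  exact (Matrix.isUnit_iff_isUnit_det _).mpr (isUnit_iff_ne_zero.mpr hd)

lemma pfaux_exists_eigenvector {n : Type*} [Fintype n] [DecidableEq n]
    (A : Matrix n n ℝ) {t : ℝ} (h : A.charpoly.IsRoot t) :
    ∃ v : n → ℝ, v ≠ 0 ∧ A *ᵥ v = t • v := by
  have hd : (t • (1 : Matrix n n ℝ) - A).det = 0 := by
    rw [← pfaux_charpoly_eval]; exact h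
  obtain ⟨v, hv0, hv⟩ := Matrix.exists_mulVec_eq_zero_iff.mpr hd
  refine ⟨v, hv0, ?_⟩
  rw [Matrix.sub_mulVec, Matrix.smul_mulVec, Matrix.one_mulVec, sub_eq_zero] at hv
  exact hv.symm

variable {r : ℕ}

lemma pfaux_pow_nonneg (A : Matrix (Fin r) (Fin r) ℝ) (h : ∀ i j, 0 ≤ A i j) (n : ℕ) :
    ∀ i j, 0 ≤ (A ^ n) i j := by
  induction n with
  | zero => intro i j; by_cases hij : i = j <;> simp [hij, Matrix.one_apply]
  | succ n ih =>
    intro i j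
    rw [pow_succ, Matrix.mul_apply]
    exact Finset.sum_nonneg fun k _ => mul_nonneg (ih i k) (h k j)

lemma pfaux_entry_le (A : Matrix (Fin r) (Fin r) ℂ) (i j : Fin r) : ‖A i j‖ ≤ ‖A‖ := by
  rw [Matrix.linfty_opNorm_def]
  calc ‖A i j‖ ≤ ∑ k, ‖A i k‖ := Finset.single_le_sum (fun k _ => norm_nonneg _) (mem_univ j)
    _ ≤ _ := by
        have h2 : (∑ k, ‖A i k‖₊ : NNReal) ≤ (univ.sup fun i => ∑ j, ‖A i j‖₊) :=
          Finset.le_sup (f := fun i => ∑ k, ‖A i k‖₊) (Finset.mem_univ i)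
        calc ∑ k, ‖A i k‖ = ((∑ k, ‖A i k‖₊ : NNReal) : ℝ) := by push_cast; rfl
          _ ≤ _ := by exact_mod_cast h2

lemma pfaux_posVec (A : Matrix (Fin r) (Fin r) ℝ) (hA : ∀ i j, 0 ≤ A i j)
    (hirr : ∀ i j, ∃ n, 0 < (A ^ (n + 1)) i j) {t : ℝ}
    {u : Fin r → ℝ} (hu : u ≠ 0) (hu0 : ∀ k, 0 ≤ u k)
    (hAu : ∀ j, t * u j ≤ (A *ᵥ u) j) :
    ∃ w : Fin r → ℝ, (∀ j, 0 < w j) ∧ ∀ j, t * w j ≤ (A *ᵥ w) j := by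
  classical
  set f : Fin r × Fin r → ℕ := fun p => (hirr p.1 p.2).choose with hf
  set N : ℕ := 1 + Finset.univ.sup f with hNdef
  have hfN : ∀ i j : Fin r, f (i, j) + 1 ≤ N := by
    intro i j
    have := Finset.le_sup (f := f) (mem_univ (i, j))
    omega
  set P : Matrix (Fin r) (Fin r) ℝ := (1 + A) ^ N with hP
  have h1A : ∀ i j, 0 ≤ (1 + A : Matrix (Fin r) (Fin r) ℝ) i j := by
    intro i j
    by_cases hij : i = j
    · subst hij
      simp only [Matrix.add_apply, Matrix.one_apply_eq]
      linarith [hA i i]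
    · simp only [Matrix.add_apply, Matrix.one_apply, if_neg hij]
      linarith [hA i j]
  have hPnn : ∀ i j, 0 ≤ P i j := pfaux_pow_nonneg _ h1A N
  have hPpos : ∀ i j, 0 < P i j := by
    intro i j
    have hcomm : Commute (1 : Matrix (Fin r) (Fin r) ℝ) A := Commute.one_left A
    have hsum := hcomm.add_pow N
    have hentry : P i j = ∑ m ∈ range (N + 1),
        (A ^ (N - m)) i j * (N.choose m : ℝ) := by
      rw [hP, hsum, Matrix.sum_apply]
      refine Finset.sum_congr rfl fun m _ => ?_
      rw [one_pow, one_mul, ← Matrix.diagonal_natCast, Matrix.mul_diagonal]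
    rw [hentry]
    have hm : N - (f (i, j) + 1) ∈ range (N + 1) := by
      simp only [mem_range]; omega
    have hval : 0 < (A ^ (N - (N - (f (i, j) + 1)))) i j * ((N.choose (N - (f (i, j) + 1))) : ℝ) := by
      have h1 : N - (N - (f (i, j) + 1)) = f (i, j) + 1 := by
        have := hfN i j; omega
      rw [h1]
      have hc : 0 < (N.choose (N - (f (i, j) + 1))) := Nat.choose_pos (by omega)
      exact mul_pos (hirr i j).choose_spec (by exact_mod_cast hc)
    refine lt_of_lt_of_le hval (Finset.single_le_sum (f := fun m => (A ^ (N - m)) i j * (N.choose m : ℝ)) ?_ hm)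
    intro m _
    exact mul_nonneg (pfaux_pow_nonneg _ hA _ i j) (by positivity)
  refine ⟨P *ᵥ u, ?_, ?_⟩
  · intro j
    obtain ⟨k0, hk0⟩ : ∃ k, u k ≠ 0 := Function.ne_iff.mp hu
    have hk0' : 0 < u k0 := lt_of_le_of_ne (hu0 k0) (Ne.symm hk0)
    rw [Matrix.mulVec, dotProduct]
    refine Finset.sum_pos' (fun k _ => mul_nonneg (hPnn j k) (hu0 k)) ⟨k0, mem_univ _, ?_⟩
    exact mul_pos (hPpos j k0) hk0'
  · intro j
    have hcomm : Commute A P := ((Commute.one_right A).add_right (Commute.refl A)).pow_right N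
    have key : A *ᵥ (P *ᵥ u) = P *ᵥ (A *ᵥ u) := by
      rw [Matrix.mulVec_mulVec, Matrix.mulVec_mulVec, hcomm.eq]
    rw [key]
    have h1 : (P *ᵥ (A *ᵥ u)) j = ∑ k, P j k * (A *ᵥ u) k := rfl
    have h2 : t * (P *ᵥ u) j = ∑ k, P j k * (t * u k) := by
      rw [Matrix.mulVec, dotProduct, Finset.mul_sum]
      congr 1; ext k; ring
    rw [h1, h2]
    exact Finset.sum_le_sum fun k _ => mul_le_mul_of_nonneg_left (hAu k) (hPnn j k)

lemma pfaux_iter (A : Matrix (Fin r) (Fin r) ℝ) (hA : ∀ i j, 0 ≤ A i j) {t : ℝ} (ht : 0 ≤ t)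
    {w : Fin r → ℝ} (hAw : ∀ j, t * w j ≤ (A *ᵥ w) j) (n : ℕ) :
    ∀ j, t ^ n * w j ≤ ((A ^ n) *ᵥ w) j := by
  induction n with
  | zero => intro j; simp [Matrix.one_mulVec]
  | succ n ih =>
    intro j
    have hstep : (A ^ (n + 1)) *ᵥ w = A *ᵥ ((A ^ n) *ᵥ w) := by
      rw [Matrix.mulVec_mulVec, ← pow_succ']
    rw [hstep]
    have h1 : (A *ᵥ ((A ^ n) *ᵥ w)) j = ∑ k, A j k * ((A ^ n) *ᵥ w) k := rfl
    have h2 : ∑ k, A j k * (t ^ n * w k) ≤ ∑ k, A j k * ((A ^ n) *ᵥ w) k :=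
      Finset.sum_le_sum fun k _ => mul_le_mul_of_nonneg_left (ih k) (hA j k)
    have h3 : ∑ k, A j k * (t ^ n * w k) = t ^ n * (A *ᵥ w) j := by
      rw [Matrix.mulVec, dotProduct, Finset.mul_sum]
      congr 1; ext k; ring
    have h4 : t ^ (n + 1) * w j ≤ t ^ n * (A *ᵥ w) j := by
      rw [pow_succ, mul_assoc]
      exact mul_le_mul_of_nonneg_left (hAw j) (pow_nonneg ht n)
    rw [h1]
    linarith

end PfAux

/-- For a finite based `ℝ≥0`-algebra `R` with basis `bC` containing the unit `bC 0 = 1`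
and an element `c = ∑ a i • bC i` with nonnegative coefficients whose action matrix `M` is
irreducible with Perron–Frobenius eigenvalue `lam`, the total coefficient sum `b n` of
`c ^ n` in the basis satisfies `lim (b n)^(1/n) = lam`. -/
theorem based_algebra_growth_rate {r : ℕ} [NeZero r]
    {R : Type*} [Ring R] [Algebra ℝ R] (bC : Module.Basis (Fin r) ℝ R)
    (hone : bC 0 = 1)
    (hnn : ∀ i j k : Fin r, 0 ≤ bC.repr (bC i * bC j) k)
    (a : Fin r → ℝ) (ha : ∀ i, 0 ≤ a i) (c : R) (hc : c = ∑ i, a i • bC i)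
    (M : Matrix (Fin r) (Fin r) ℝ) (hM : ∀ k j, M k j = bC.repr (c * bC j) k)
    (hirr : M.IsIrreduciblePow)
    (lam : ℝ) (hpos : 0 < lam) (hroot : M.complexCharpoly.IsRoot (lam : ℂ))
    (hdom : ∀ μ : ℂ, M.complexCharpoly.IsRoot μ → ‖μ‖ ≤ lam)
    (b : ℕ → ℝ) (hb : ∀ n, b n = ∑ k, bC.repr (c ^ n) k) :
    Filter.Tendsto (fun n : ℕ => (b n) ^ ((n : ℝ)⁻¹)) Filter.atTop (nhds lam) := by
  classical
  have hr : 0 < r := Nat.pos_of_ne_zero (NeZero.ne r)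
  -- M is entrywise nonnegative
  have hMnn : ∀ k j, 0 ≤ M k j := by
    intro k j
    rw [hM]
    have hcb : c * bC j = ∑ i, a i • (bC i * bC j) := by
      rw [hc, Finset.sum_mul]
      exact Finset.sum_congr rfl fun i _ => smul_mul_assoc (a i) (bC i) (bC j)
    rw [hcb, map_sum]
    rw [Finset.sum_apply']
    simp only [_root_.map_smul, Finsupp.smul_apply, smul_eq_mul]
    exact Finset.sum_nonneg fun i _ => mul_nonneg (ha i) (hnn i j k)
  have hMn : ∀ n, ∀ i j : Fin r, 0 ≤ (M ^ n) i j := fun n => pfaux_pow_nonneg M hMnn n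
  -- coefficients of powers of c are entries of powers of M
  have hmul : ∀ (x : R) (k : Fin r), bC.repr (c * x) k = ∑ j, M k j * bC.repr x j := by
    intro x k
    have hx : c * x = ∑ j, bC.repr x j • (c * bC j) := by
      conv_lhs => rw [← bC.sum_repr x, Finset.mul_sum]
      exact Finset.sum_congr rfl fun j _ => (mul_smul_comm (bC.repr x j) c (bC j))
    rw [hx, map_sum, Finset.sum_apply']
    simp only [_root_.map_smul, Finsupp.smul_apply, smul_eq_mul]
    exact Finset.sum_congr rfl fun j _ => by rw [hM k j]; ring
  have hrepr : ∀ n, ∀ k : Fin r, bC.repr (c ^ n) k = (M ^ n) k 0 := by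
    intro n
    induction n with
    | zero =>
      intro k
      rw [pow_zero, pow_zero, ← hone, bC.repr_self]
      rw [Finsupp.single_apply, Matrix.one_apply]
      by_cases h : k = 0 <;> simp [h, eq_comm]
    | succ n ih =>
      intro k
      rw [pow_succ' c n, hmul (c ^ n) k]
      have hpow : (M ^ (n + 1)) k 0 = ∑ j, M k j * (M ^ n) j 0 := by
        rw [pow_succ' M n, Matrix.mul_apply]
      rw [hpow]
      exact Finset.sum_congr rfl fun j _ => by rw [ih j]
  have hbn : ∀ n, b n = ∑ k, (M ^ n) k 0 := fun n => by
    rw [hb]; exact Finset.sum_congr rfl fun k _ => hrepr n k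
  -- lam is a real root of the characteristic polynomial of M, hence of Mᵀ
  have hrootR : M.charpoly.IsRoot lam := by
    have h1 : ((M.map (algebraMap ℝ ℂ)).charpoly).eval ((lam : ℂ)) = 0 := hroot
    rw [Matrix.charpoly_map, Polynomial.eval_map] at h1
    have h2 : (lam : ℂ) = algebraMap ℝ ℂ lam := rfl
    rw [h2, Polynomial.eval₂_at_apply] at h1
    have h3 : ((M.charpoly.eval lam : ℝ) : ℂ) = 0 := h1
    show M.charpoly.eval lam = 0
    exact_mod_cast h3
  have hrootT : Mᵀ.charpoly.IsRoot lam := by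
    rw [Polynomial.IsRoot, pfaux_charpoly_eval]
    have h2 : (lam • (1 : Matrix (Fin r) (Fin r) ℝ) - M)ᵀ
        = lam • (1 : Matrix (Fin r) (Fin r) ℝ) - Mᵀ := by
      rw [Matrix.transpose_sub, Matrix.transpose_smul, Matrix.transpose_one]
    rw [← h2, Matrix.det_transpose, ← pfaux_charpoly_eval]
    exact hrootR
  -- positive left sub-eigenvector
  have hMtnn : ∀ i j, 0 ≤ Mᵀ i j := fun i j => hMnn j i
  have hirrT : ∀ i j : Fin r, ∃ n, 0 < (Mᵀ ^ (n + 1)) i j := by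
    intro i j
    obtain ⟨n, hn⟩ := hirr j i
    exact ⟨n, by rw [← Matrix.transpose_pow]; exact hn⟩
  obtain ⟨v, hv0, hveq⟩ := pfaux_exists_eigenvector Mᵀ hrootT
  set u : Fin r → ℝ := fun k => |v k| with hu
  have hune : u ≠ 0 := by
    obtain ⟨k, hk⟩ := Function.ne_iff.mp hv0
    intro h
    apply hk
    have := congrFun h k
    simpa [hu, abs_eq_zero] using this
  have hu0 : ∀ k, 0 ≤ u k := fun k => abs_nonneg _
  have hAu : ∀ j, lam * u j ≤ (Mᵀ *ᵥ u) j := by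
    intro j
    have h1 : (Mᵀ *ᵥ u) j = ∑ k, |Mᵀ j k * v k| := by
      rw [Matrix.mulVec, dotProduct]
      refine Finset.sum_congr rfl fun k _ => ?_
      rw [abs_mul, abs_of_nonneg (hMtnn j k)]
    have h3 : (Mᵀ *ᵥ v) j = lam * v j := by
      rw [hveq]; simp
    calc lam * u j = |lam| * |v j| := by rw [abs_of_pos hpos]
      _ = |lam * v j| := (abs_mul lam (v j)).symm
      _ = |(Mᵀ *ᵥ v) j| := by rw [h3]
      _ = |∑ k, Mᵀ j k * v k| := rfl
      _ ≤ ∑ k, |Mᵀ j k * v k| := Finset.abs_sum_le_sum_abs _ _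
      _ = (Mᵀ *ᵥ u) j := h1.symm
  obtain ⟨w, hwpos, hww⟩ := pfaux_posVec Mᵀ hMtnn hirrT hune hu0 hAu
  have hit := pfaux_iter Mᵀ hMtnn hpos.le hww
  set W : ℝ := ∑ k, w k with hW
  have hWpos : 0 < W := Finset.sum_pos (fun k _ => hwpos k) Finset.univ_nonempty
  set C1 : ℝ := w 0 / W with hC1def
  have hC1 : 0 < C1 := div_pos (hwpos 0) hWpos
  -- lower bound : C1 * lam ^ n ≤ b n
  have hlow : ∀ n, C1 * lam ^ n ≤ b n := by
    intro n
    have h2 : ((Mᵀ ^ n) *ᵥ w) 0 = ∑ k, (M ^ n) k 0 * w k := by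
      rw [← Matrix.transpose_pow]
      rfl
    have h3 : ∑ k, (M ^ n) k 0 * w k ≤ b n * W := by
      rw [hbn, Finset.sum_mul]
      refine Finset.sum_le_sum fun k _ => ?_
      exact mul_le_mul_of_nonneg_left
        (Finset.single_le_sum (fun k _ => (hwpos k).le) (mem_univ k)) (hMn n k 0)
    rw [hC1def, div_mul_eq_mul_div, div_le_iff₀ hWpos]
    calc w 0 * lam ^ n = lam ^ n * w 0 := mul_comm _ _
      _ ≤ ((Mᵀ ^ n) *ᵥ w) 0 := hit n 0
      _ = ∑ k, (M ^ n) k 0 * w k := h2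
      _ ≤ b n * W := h3
  have hbpos : ∀ n, 0 < b n := fun n => lt_of_lt_of_le (by positivity) (hlow n)
  -- upper bound through the complex matrix N and Gelfand's formula
  set N : Matrix (Fin r) (Fin r) ℂ := M.map (algebraMap ℝ ℂ) with hN
  have hNpow : ∀ n, N ^ n = (M ^ n).map (algebraMap ℝ ℂ) := by
    intro n
    rw [hN, ← RingHom.mapMatrix_apply, ← map_pow, RingHom.mapMatrix_apply]
  have hup : ∀ n, b n ≤ (r : ℝ) * ‖N ^ n‖ := by
    intro n
    rw [hbn]
    have hent : ∀ k : Fin r, (M ^ n) k 0 ≤ ‖N ^ n‖ := by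
      intro k
      have h1 : (N ^ n) k 0 = (((M ^ n) k 0 : ℝ) : ℂ) := by rw [hNpow]; rfl
      have h2 : ‖(N ^ n) k 0‖ ≤ ‖N ^ n‖ := pfaux_entry_le _ k 0
      rw [h1] at h2
      calc (M ^ n) k 0 ≤ |(M ^ n) k 0| := le_abs_self _
        _ = ‖(((M ^ n) k 0 : ℝ) : ℂ)‖ := by rw [Complex.norm_real, Real.norm_eq_abs]
        _ ≤ ‖N ^ n‖ := h2
    calc ∑ k, (M ^ n) k 0 ≤ ∑ _k : Fin r, ‖N ^ n‖ := Finset.sum_le_sum fun k _ => hent k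
      _ = (r : ℝ) * ‖N ^ n‖ := by
          rw [Finset.sum_const, Finset.card_univ, Fintype.card_fin, nsmul_eq_mul]
  have hLle : spectralRadius ℂ N ≤ ENNReal.ofReal lam := by
    rw [spectralRadius]
    refine iSup₂_le fun μ hμ => ?_
    have h1 : N.charpoly.IsRoot μ := pfaux_spectrum_isRoot N hμ
    have h2 : ‖μ‖ ≤ lam := by
      apply hdom
      rw [Matrix.complexCharpoly, ← hN]
      exact h1
    rw [← enorm_eq_nnnorm, ← ofReal_norm]
    exact ENNReal.ofReal_le_ofReal (by simpa using h2)
  have hLne : spectralRadius ℂ N ≠ ⊤ := ne_top_of_le_ne_top ENNReal.ofReal_ne_top hLle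
  have hgel := spectrum.pow_norm_pow_one_div_tendsto_nhds_spectralRadius N
  have hyt : Tendsto (fun n : ℕ => ‖N ^ n‖ ^ ((n : ℝ)⁻¹)) atTop
      (nhds (spectralRadius ℂ N).toReal) := by
    have h1 := (ENNReal.tendsto_toReal hLne).comp hgel
    refine h1.congr fun n => ?_
    simp only [Function.comp_apply]
    rw [ENNReal.toReal_ofReal (Real.rpow_nonneg (norm_nonneg _) _), one_div]
  have hLtoR : (spectralRadius ℂ N).toReal ≤ lam :=
    ENNReal.toReal_le_of_le_ofReal hpos.le hLle
  -- final assembly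
  rw [Metric.tendsto_atTop]
  intro ε hε
  have T1 : Tendsto (fun n : ℕ => C1 ^ ((n : ℝ)⁻¹) * lam) atTop (nhds lam) := by
    have := (pfaux_tendsto_rpow_inv C1 hC1).mul_const lam
    simpa using this
  have E1 : ∀ᶠ n : ℕ in atTop, lam - ε < C1 ^ ((n : ℝ)⁻¹) * lam :=
    T1.eventually_const_lt (by linarith)
  have T2 : Tendsto (fun n : ℕ => (r : ℝ) ^ ((n : ℝ)⁻¹) * (‖N ^ n‖ ^ ((n : ℝ)⁻¹))) atTop
      (nhds ((spectralRadius ℂ N).toReal)) := by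
    have := (pfaux_tendsto_rpow_inv (r : ℝ) (by exact_mod_cast hr)).mul hyt
    simpa using this
  have E2 : ∀ᶠ n : ℕ in atTop,
      (r : ℝ) ^ ((n : ℝ)⁻¹) * (‖N ^ n‖ ^ ((n : ℝ)⁻¹)) < lam + ε :=
    T2.eventually_lt_const (by linarith)
  have key : ∀ᶠ n : ℕ in atTop, dist (b n ^ ((n : ℝ)⁻¹)) lam < ε := by
    filter_upwards [E1, E2, eventually_ge_atTop 1] with n h1 h2 h3
    have hn0 : (n : ℝ) ≠ 0 := Nat.cast_ne_zero.mpr (by omega)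
    have hinv : (0 : ℝ) ≤ (n : ℝ)⁻¹ := by positivity
    have hlow2 : C1 ^ ((n : ℝ)⁻¹) * lam ≤ b n ^ ((n : ℝ)⁻¹) := by
      have h5 : (C1 * lam ^ n) ^ ((n : ℝ)⁻¹) ≤ b n ^ ((n : ℝ)⁻¹) :=
        Real.rpow_le_rpow (by positivity) (hlow n) hinv
      have hln : ((lam ^ n : ℝ)) ^ ((n : ℝ)⁻¹) = lam := by
        rw [← Real.rpow_natCast lam n, ← Real.rpow_mul hpos.le,
          mul_inv_cancel₀ hn0, Real.rpow_one]
      calc C1 ^ ((n : ℝ)⁻¹) * lam = (C1 * lam ^ n) ^ ((n : ℝ)⁻¹) := by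
            rw [Real.mul_rpow hC1.le (by positivity), hln]
        _ ≤ _ := h5
    have hup2 : b n ^ ((n : ℝ)⁻¹) ≤ (r : ℝ) ^ ((n : ℝ)⁻¹) * (‖N ^ n‖ ^ ((n : ℝ)⁻¹)) := by
      have h5 := Real.rpow_le_rpow (hbpos n).le (hup n) hinv
      rwa [Real.mul_rpow (by positivity) (norm_nonneg _)] at h5
    rw [Real.dist_eq, abs_lt]
    constructor <;> linarith
  exact eventually_atTop.mp key
end
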